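/- arXiv:2107.09057 — 5 statements merged into one kernel-verified Lean document; each statement's English description precedes it below -/
import Mathlib

section
/- Quantum smooth Hirschman-Beckner uncertainty principle, commutative finite-dimensional case: assume k > 0, F is a k-transform, F* ∘ F = k • id, and d i ≥ 1 and τ j ≥ 1 for all i, j. Set d₁ = min_i d i, τ₁ = min_j τ j, D = ∑ i, d i, T = ∑ j, τ j, and f(t) = 4 t * log t + 2 t. Then for every nonzero x : Fin n → ℂ, all ε, η ∈ [0,1], and all reals 1 ≤ p < ∞ and 1 ≤ q < ∞: H_ε^{p,d}(|x|²)/‖x‖_{2,d}² + H_η^{q,τ}(|F x|²)/‖F x‖_{2,τ}² ≥ −4 log ‖x‖_{2,d} − (f(‖x‖_∞ + 1)/‖x‖_{2,d}²) * d₁^(−1/p) * D * ε − (f(‖F x‖_∞ + 1)/‖F x‖_{2,τ}²) * τ₁^(−1/q) * T * η. -/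
open Finset

/-- Weighted `p`-norm on `Fin n → ℂ` with weight `d`. -/
noncomputable def wnorm {n : ℕ} (d : Fin n → ℝ) (p : ℝ) (x : Fin n → ℂ) : ℝ :=
  (∑ i, d i * ‖x i‖ ^ p) ^ (1 / p)

/-- Sup (infinity) norm on `Fin n → ℂ`. -/
noncomputable def inorm {n : ℕ} (x : Fin n → ℂ) : ℝ :=
  ⨆ i, ‖x i‖

/-- `G` is the adjoint of `F` with respect to the weighted inner products with
weights `d` and `τ`. -/
def IsAdjointPair {n m : ℕ} (d : Fin n → ℝ) (τ : Fin m → ℝ)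
    (F : (Fin n → ℂ) →ₗ[ℂ] (Fin m → ℂ)) (G : (Fin m → ℂ) →ₗ[ℂ] (Fin n → ℂ)) : Prop :=
  ∀ (x : Fin n → ℂ) (u : Fin m → ℂ),
    ∑ j, (τ j : ℂ) * (starRingEnd ℂ) (F x j) * u j
      = ∑ i, (d i : ℂ) * (starRingEnd ℂ) (x i) * G u i

/-- Von Neumann entropy of `|x|²` with respect to the weight `d`
(the convention `0 * log 0 = 0` holds since `Real.log 0 = 0`). -/
noncomputable def went {n : ℕ} (d : Fin n → ℝ) (x : Fin n → ℂ) : ℝ :=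
  -∑ i, d i * ‖x i‖ ^ 2 * Real.log (‖x i‖ ^ 2)

/-- The `(p, ε)` smooth entropy of `|x|²` with respect to the weight `d`. -/
noncomputable def smoothEnt {n : ℕ} (d : Fin n → ℝ) (p ε : ℝ) (x : Fin n → ℂ) : ℝ :=
  sInf { e : ℝ | ∃ y : Fin n → ℂ, wnorm d p (x - y) ≤ ε ∧ e = went d y }

namespace QSHB

lemma sum_two_nonneg {n : ℕ} (d : Fin n → ℝ) (hd : ∀ i, 0 ≤ d i) (x : Fin n → ℂ) :
    0 ≤ ∑ i, d i * ‖x i‖ ^ (2:ℝ) :=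
  Finset.sum_nonneg fun i _ => mul_nonneg (hd i) (Real.rpow_nonneg (norm_nonneg _) _)

lemma wnorm_two_sq {n : ℕ} (d : Fin n → ℝ) (hd : ∀ i, 0 ≤ d i) (x : Fin n → ℂ) :
    (wnorm d 2 x) ^ 2 = ∑ i, d i * ‖x i‖ ^ 2 := by
  have h0 : 0 ≤ ∑ i, d i * ‖x i‖ ^ (2:ℝ) := sum_two_nonneg d hd x
  rw [wnorm, ← Real.rpow_natCast (_ ^ (1/(2:ℝ))) 2, ← Real.rpow_mul h0]
  norm_num

lemma wnorm_two_pos {n : ℕ} (d : Fin n → ℝ) (hd : ∀ i, 0 < d i) (x : Fin n → ℂ)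
    (hx : x ≠ 0) : 0 < wnorm d 2 x := by
  obtain ⟨i, hi⟩ : ∃ i, x i ≠ 0 := Function.ne_iff.mp hx
  have : 0 < ∑ j, d j * ‖x j‖ ^ (2:ℝ) := by
    apply Finset.sum_pos' (fun j _ => mul_nonneg (hd j).le (Real.rpow_nonneg (norm_nonneg _) _))
    exact ⟨i, Finset.mem_univ i, mul_pos (hd i)
      (Real.rpow_pos_of_pos (by simpa using hi) _)⟩
  exact Real.rpow_pos_of_pos this _

lemma wnorm_one_eq {n : ℕ} (d : Fin n → ℝ) (x : Fin n → ℂ) :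
    wnorm d 1 x = ∑ i, d i * ‖x i‖ := by
  simp [wnorm]

lemma inorm_nonneg {n : ℕ} (x : Fin n → ℂ) : 0 ≤ inorm x :=
  Real.iSup_nonneg fun i => norm_nonneg _

lemma le_inorm {n : ℕ} (x : Fin n → ℂ) (i : Fin n) : ‖x i‖ ≤ inorm x := by
  rw [inorm]
  exact le_ciSup (Set.Finite.bddAbove (Set.finite_range fun j => ‖x j‖)) i

end QSHB

namespace QSHB2
open QSHB

lemma neg_log_le {t : ℝ} (ht : 0 < t) : -Real.log t ≤ 1/t - 1 := by
  have h := Real.log_le_sub_one_of_pos (show (0:ℝ) < t⁻¹ by positivity)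
  rw [Real.log_inv] at h
  have : t⁻¹ = 1/t := by ring
  linarith [h, this ▸ h]

lemma abs_hderiv_le {t R : ℝ} (ht : 0 < t) (htR : t ≤ R) (hR : 1 ≤ R) :
    |4*t*Real.log t + 2*t| ≤ 4*R*Real.log R + 2*R := by
  have hlogR : 0 ≤ Real.log R := Real.log_nonneg hR
  rcases le_or_gt t 1 with h1 | h1
  · have hlog : Real.log t ≤ 0 := Real.log_nonpos ht.le h1
    have hs : 0 < Real.sqrt t := Real.sqrt_pos.mpr ht
    have hsq : Real.sqrt t ^ 2 = t := Real.sq_sqrt ht.le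
    have h2 : -Real.log t ≤ 2 / Real.sqrt t - 2 := by
      have hl : Real.log (Real.sqrt t) = Real.log t / 2 := Real.log_sqrt ht.le
      have h2' := neg_log_le hs
      rw [hl] at h2'
      have e : 2 / Real.sqrt t = 2 * (1 / Real.sqrt t) := by ring
      linarith
    have h3 : t * (-Real.log t) ≤ 2 * (t / Real.sqrt t) - 2 * t := by
      have := mul_le_mul_of_nonneg_left h2 ht.le
      have he : t * (2 / Real.sqrt t - 2) = 2 * (t / Real.sqrt t) - 2 * t := by ring
      linarith [he ▸ this]
    rw [Real.div_sqrt] at h3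
    rw [abs_le]
    constructor
    · nlinarith [sq_nonneg (Real.sqrt t - 2/5), hs.le, hsq]
    · nlinarith [mul_nonneg (mul_nonneg (by norm_num : (0:ℝ) ≤ 4) ht.le) (neg_nonneg.mpr hlog)]
  · have hlog : 0 ≤ Real.log t := Real.log_nonneg h1.le
    have hll : Real.log t ≤ Real.log R := Real.log_le_log ht htR
    rw [abs_of_nonneg (by nlinarith)]
    nlinarith

lemma entropy_lipschitz {R a b : ℝ} (hR : 1 ≤ R) (ha : 0 ≤ a) (haR : a ≤ R)
    (hb : 0 ≤ b) (hbR : b ≤ R) :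
    |b^2 * Real.log (b^2) - a^2 * Real.log (a^2)| ≤ (4*R*Real.log R + 2*R) * |b - a| := by
  have hlogR : 0 ≤ Real.log R := Real.log_nonneg hR
  have hC2 : 2 ≤ 4*R*Real.log R + 2*R := by nlinarith
  -- the one-sided zero case
  have hzero : ∀ c : ℝ, 0 < c → c ≤ R → |c^2 * Real.log (c^2)| ≤ (4*R*Real.log R + 2*R) * c := by
    intro c hc hcR
    have hl2 : Real.log (c^2) = 2 * Real.log c := by
      rw [show c^2 = c*c by ring, Real.log_mul hc.ne' hc.ne']; ring
    rcases le_or_gt c 1 with hc1 | hc1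
    · have hneg := neg_log_le hc
      have hld : Real.log c ≤ 0 := Real.log_nonpos hc.le hc1
      rw [abs_of_nonpos (by nlinarith), hl2]
      have : c * (-Real.log c) ≤ 1 - c := by
        have := mul_le_mul_of_nonneg_left hneg hc.le
        have he : c * (1/c - 1) = 1 - c := by field_simp
        linarith [he ▸ this]
      nlinarith
    · have hld : 0 ≤ Real.log c := Real.log_nonneg hc1.le
      have hll : Real.log c ≤ Real.log R := Real.log_le_log hc hcR
      rw [abs_of_nonneg (by nlinarith), hl2]
      have hcl : c * Real.log c ≤ R * Real.log R := by
        apply mul_le_mul hcR hll hld (by linarith)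
      nlinarith [mul_le_mul_of_nonneg_left hcl hc.le,
        mul_nonneg (mul_nonneg hc.le (by linarith : (0:ℝ) ≤ R)) hlogR,
        mul_nonneg hc.le (by linarith : (0:ℝ) ≤ R)]
  rcases eq_or_lt_of_le ha with haz | hap
  · rcases eq_or_lt_of_le hb with hbz | hbp
    · simp [← haz, ← hbz]
    · rw [← haz]
      simpa [abs_of_nonneg hb] using hzero b hbp hbR
  · rcases eq_or_lt_of_le hb with hbz | hbp
    · rw [← hbz]
      simpa [abs_of_nonneg ha, abs_sub_comm] using hzero a hap haR
    · -- both positive: MVT on Icc (min a b) R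
      set s : Set ℝ := Set.Icc (min a b) R with hs
      have hmpos : 0 < min a b := lt_min hap hbp
      have hderiv : ∀ t ∈ s, HasDerivWithinAt (fun t : ℝ => t^2 * Real.log (t^2))
          (4*t*Real.log t + 2*t) s t := by
        intro t hts
        have htp : 0 < t := lt_of_lt_of_le hmpos hts.1
        have h1 : HasDerivAt (fun t : ℝ => t^2) (2*t) t := by
          simpa using hasDerivAt_pow 2 t
        have h2 : HasDerivAt (fun t : ℝ => Real.log (t^2)) ((t^2)⁻¹ * (2*t)) t :=
          (Real.hasDerivAt_log (by positivity)).comp t h1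
        have h3 := h1.mul h2
        have he : 2*t * Real.log (t^2) + t^2 * ((t^2)⁻¹ * (2*t)) = 4*t*Real.log t + 2*t := by
          rw [show t^2 = t*t by ring, Real.log_mul htp.ne' htp.ne']
          field_simp
          ring
        exact (he ▸ h3).hasDerivWithinAt
      have hbound : ∀ t ∈ s, ‖4*t*Real.log t + 2*t‖ ≤ 4*R*Real.log R + 2*R := by
        intro t hts
        rw [Real.norm_eq_abs]
        exact abs_hderiv_le (lt_of_lt_of_le hmpos hts.1) hts.2 hR
      have := Convex.norm_image_sub_le_of_norm_hasDerivWithin_le hderiv hbound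
        (convex_Icc _ _) (Set.mem_Icc.mpr ⟨min_le_left a b, haR⟩)
        (Set.mem_Icc.mpr ⟨min_le_right a b, hbR⟩)
      simpa [Real.norm_eq_abs] using this

end QSHB2

namespace QSHB3
open QSHB QSHB2

lemma smooth_bound {n : ℕ} (hn : 0 < n) (d : Fin n → ℝ) (hd1 : ∀ i, 1 ≤ d i)
    (p ε : ℝ) (hp : 1 ≤ p) (hε0 : 0 ≤ ε) (hε1 : ε ≤ 1) (x : Fin n → ℂ) :
    went d x - (4*(inorm x + 1)*Real.log (inorm x + 1) + 2*(inorm x + 1))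
        * (⨅ i, d i) ^ (-(1/p)) * (∑ i, d i) * ε ≤ smoothEnt d p ε x := by
  haveI : Nonempty (Fin n) := Fin.pos_iff_nonempty.mp hn
  have hd0 : ∀ i, (0:ℝ) < d i := fun i => lt_of_lt_of_le zero_lt_one (hd1 i)
  have hp0 : (0:ℝ) < p := lt_of_lt_of_le zero_lt_one hp
  set dm := ⨅ i, d i with hdm
  have hdm1 : 1 ≤ dm := le_ciInf hd1
  have hdm0 : 0 < dm := lt_of_lt_of_le zero_lt_one hdm1
  have hdm_le : ∀ i, dm ≤ d i := fun i =>
    ciInf_le (Set.Finite.bddBelow (Set.finite_range d)) i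
  set R := inorm x + 1 with hRdef
  have hR : 1 ≤ R := by have := inorm_nonneg x; simp [hRdef]; linarith
  set C0 := 4*R*Real.log R + 2*R with hC0def
  have hlogR : 0 ≤ Real.log R := Real.log_nonneg hR
  have hC0 : 0 ≤ C0 := by rw [hC0def]; nlinarith
  set δ := ε * dm ^ (-(1/p)) with hδdef
  have hpow1 : dm ^ (-(1/p)) ≤ 1 :=
    Real.rpow_le_one_of_one_le_of_nonpos hdm1 (neg_nonpos.mpr (by positivity))
  have hpow0 : 0 ≤ dm ^ (-(1/p)) := Real.rpow_nonneg hdm0.le _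
  have hδ0 : 0 ≤ δ := mul_nonneg hε0 hpow0
  have hδ1 : δ ≤ 1 := mul_le_one₀ hε1 hpow0 hpow1
  rw [smoothEnt]
  apply le_csInf
  · refine ⟨went d x, x, ?_, rfl⟩
    have : x - x = 0 := by simp
    rw [this]
    have : wnorm d p 0 = 0 := by
      simp [wnorm, Real.zero_rpow hp0.ne', Real.zero_rpow (inv_ne_zero hp0.ne'), one_div]
    rw [this]; exact hε0
  · rintro e ⟨y, hy, rfl⟩
    -- coordinatewise bound
    have habs0 : ∀ z : ℂ, (0:ℝ) ≤ ‖z‖ := fun z => norm_nonneg z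
    have hsum : ∑ i, d i * ‖(x - y) i‖ ^ p ≤ ε ^ p := by
      have h0 : 0 ≤ ∑ i, d i * ‖(x-y) i‖ ^ p :=
        Finset.sum_nonneg fun i _ => mul_nonneg (hd0 i).le (Real.rpow_nonneg (habs0 _) _)
      rw [wnorm] at hy
      have h1 := Real.rpow_le_rpow (Real.rpow_nonneg h0 _) hy hp0.le
      rwa [← Real.rpow_mul h0, one_div, inv_mul_cancel₀ hp0.ne', Real.rpow_one] at h1
    have hco : ∀ i, ‖x i - y i‖ ≤ δ := by
      intro i
      have hterm : d i * ‖(x - y) i‖ ^ p ≤ ε ^ p :=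
        le_trans (Finset.single_le_sum
          (fun j _ => mul_nonneg (hd0 j).le (Real.rpow_nonneg (habs0 _) _))
          (Finset.mem_univ i)) hsum
      have hxy : (x - y) i = x i - y i := rfl
      rw [hxy] at hterm
      have h2 : ‖x i - y i‖ ^ p ≤ ε ^ p / dm := by
        have h3 : ‖x i - y i‖ ^ p ≤ ε ^ p / d i := by
          rw [le_div_iff₀ (hd0 i)]
          linarith [hterm]
        exact le_trans h3 (div_le_div_of_nonneg_left (by positivity) hdm0 (hdm_le i))
      have h4 := Real.rpow_le_rpow (Real.rpow_nonneg (habs0 _) _) h2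
        (by positivity : (0:ℝ) ≤ 1/p)
      rw [← Real.rpow_mul (habs0 _), mul_one_div, div_self hp0.ne', Real.rpow_one] at h4
      have h5 : (ε ^ p / dm) ^ ((1:ℝ)/p) = δ := by
        rw [div_eq_mul_inv, Real.mul_rpow (by positivity) (by positivity),
          ← Real.rpow_mul hε0, mul_one_div, div_self hp0.ne', Real.rpow_one,
          Real.inv_rpow hdm0.le, ← Real.rpow_neg hdm0.le]
      rw [h5] at h4
      exact h4
    have key : ∀ i, |‖y i‖^2 * Real.log (‖y i‖^2)
        - ‖x i‖^2 * Real.log (‖x i‖^2)| ≤ C0 * δ := by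
      intro i
      have hax : ‖x i‖ ≤ R := by
        have := le_inorm x i; rw [hRdef]; linarith
      have hay : ‖y i‖ ≤ R := by
        have h5 : ‖y i‖ ≤ ‖y i - x i‖ + ‖x i‖ := by
          simpa using norm_sub_le_norm_sub_add_norm_sub (y i) (x i) 0
        have h5' : ‖y i - x i‖ = ‖x i - y i‖ := by
          exact norm_sub_rev _ _
        have h6 := le_inorm x i
        have h7 := hco i
        rw [hRdef]; linarith
      refine le_trans (entropy_lipschitz hR (habs0 (x i)) hax (habs0 (y i)) hay) ?_
      apply mul_le_mul_of_nonneg_left ?_ hC0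
      have h7 : |‖y i‖ - ‖x i‖| ≤ ‖y i - x i‖ :=
        abs_norm_sub_norm_le _ _
      have h8 : ‖y i - x i‖ = ‖x i - y i‖ := by
        exact norm_sub_rev _ _
      linarith [hco i]
    have e1 : went d x - went d y = ∑ i, d i *
        (‖y i‖^2 * Real.log (‖y i‖^2)
          - ‖x i‖^2 * Real.log (‖x i‖^2)) := by
      simp only [went, mul_sub, Finset.sum_sub_distrib]
      have a1 : ∀ z : Fin n → ℂ, ∑ i, d i * (‖z i‖^2 * Real.log (‖z i‖^2))
          = ∑ i, d i * ‖z i‖^2 * Real.log (‖z i‖^2) := by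
        intro z; apply Finset.sum_congr rfl; intro i _; ring
      rw [a1 x, a1 y]; ring
    have hsum2 : went d x - went d y ≤ C0 * δ * ∑ i, d i := by
      rw [e1]
      calc ∑ i, d i * (‖y i‖^2 * Real.log (‖y i‖^2)
            - ‖x i‖^2 * Real.log (‖x i‖^2))
          ≤ ∑ i, d i * (C0 * δ) := by
            apply Finset.sum_le_sum
            intro i _
            exact mul_le_mul_of_nonneg_left (le_trans (le_abs_self _) (key i)) (hd0 i).le
        _ = C0 * δ * ∑ i, d i := by rw [← Finset.sum_mul]; ring
    have e2 : C0 * dm ^ (-(1/p)) * (∑ i, d i) * ε = C0 * δ * ∑ i, d i := by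
      rw [hδdef]; ring
    rw [e2]
    linarith

end QSHB3

namespace QSHB4
open QSHB

lemma conj_mul_self (w : ℂ) : (starRingEnd ℂ) w * w = ((‖w‖ ^ 2 : ℝ) : ℂ) := by
  rw [mul_comm, Complex.mul_conj, Complex.sq_norm]

lemma hadj' {n m : ℕ} {d : Fin n → ℝ} {τ : Fin m → ℝ}
    {F : (Fin n → ℂ) →ₗ[ℂ] (Fin m → ℂ)} {G : (Fin m → ℂ) →ₗ[ℂ] (Fin n → ℂ)}
    (hadj : IsAdjointPair d τ F G) (y : Fin n → ℂ) (w : Fin m → ℂ) :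
    ∑ j, (τ j : ℂ) * F y j * (starRingEnd ℂ) (w j)
      = ∑ i, (d i : ℂ) * y i * (starRingEnd ℂ) (G w i) := by
  have h := congrArg (starRingEnd ℂ) (hadj y w)
  rw [map_sum, map_sum] at h
  simp only [map_mul, Complex.conj_conj, Complex.conj_ofReal] at h
  exact h

lemma plancherel {n m : ℕ} {d : Fin n → ℝ} {τ : Fin m → ℝ} {k : ℝ}
    {F : (Fin n → ℂ) →ₗ[ℂ] (Fin m → ℂ)} {G : (Fin m → ℂ) →ₗ[ℂ] (Fin n → ℂ)}
    (hadj : IsAdjointPair d τ F G) (hiso : ∀ y, G (F y) = (k : ℂ) • y)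
    (y : Fin n → ℂ) :
    ∑ j, τ j * ‖F y j‖ ^ 2 = k * ∑ i, d i * ‖y i‖ ^ 2 := by
  have h := hadj y (F y)
  rw [hiso y] at h
  have hL : ∑ j, (τ j : ℂ) * (starRingEnd ℂ) (F y j) * F y j
      = ((∑ j, τ j * ‖F y j‖ ^ 2 : ℝ) : ℂ) := by
    push_cast
    apply Finset.sum_congr rfl
    intro j _
    rw [mul_assoc, conj_mul_self]
    push_cast
    ring
  have hR : ∑ i, (d i : ℂ) * (starRingEnd ℂ) (y i) * ((k : ℂ) • y) i
      = ((k * ∑ i, d i * ‖y i‖ ^ 2 : ℝ) : ℂ) := by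
    push_cast
    rw [Finset.mul_sum]
    apply Finset.sum_congr rfl
    intro i _
    simp only [Pi.smul_apply, smul_eq_mul]
    rw [show (d i : ℂ) * (starRingEnd ℂ) (y i) * ((k:ℂ) * y i)
        = (k : ℂ) * ((d i : ℂ) * ((starRingEnd ℂ) (y i) * y i)) by ring, conj_mul_self]
    push_cast
    ring
  rw [hL, hR] at h
  exact_mod_cast h

lemma hFcoord {n m : ℕ} (F : (Fin n → ℂ) →ₗ[ℂ] (Fin m → ℂ)) (y : Fin n → ℂ) (j : Fin m) :
    F y j = ∑ i, y i * F (Pi.single i 1) j := by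
  have hy : y = ∑ i, y i • (Pi.single i 1 : Fin n → ℂ) := by
    funext r
    simp [Pi.single_apply, Finset.sum_apply]
  conv_lhs => rw [hy]
  rw [map_sum]
  simp [Finset.sum_apply]

lemma exp_interp {a t : ℝ} (ha : 0 ≤ a) (ht0 : 0 ≤ t) (ht1 : t ≤ 1) :
    Real.exp (t * Real.log a) ≤ 1 + a := by
  rcases eq_or_lt_of_le ha with h0 | h0
  · rw [← h0, Real.log_zero, mul_zero, Real.exp_zero]; linarith
  · rcases le_or_gt a 1 with h1 | h1
    · have : t * Real.log a ≤ 0 :=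
        mul_nonpos_of_nonneg_of_nonpos ht0 (Real.log_nonpos h0.le h1)
      calc Real.exp (t * Real.log a) ≤ 1 := Real.exp_le_one_iff.mpr this
        _ ≤ 1 + a := by linarith
    · have hla : 0 ≤ Real.log a := Real.log_nonneg h1.le
      have : t * Real.log a ≤ Real.log a := by nlinarith
      calc Real.exp (t * Real.log a) ≤ Real.exp (Real.log a) := Real.exp_le_exp.mpr this
        _ = a := Real.exp_log h0
        _ ≤ 1 + a := by linarith

end QSHB4

namespace QSHB5
open QSHB QSHB4

noncomputable def Uzf {n : ℕ} (u : Fin n → ℂ) (z : ℂ) : Fin n → ℂ :=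
  fun i => u i * Complex.exp ((1 - z) * (Real.log (‖u i‖) : ℂ))

lemma Uzf_one {n : ℕ} (u : Fin n → ℂ) : Uzf u 1 = u := by
  funext i; simp [Uzf]

lemma abs_Uzf {n : ℕ} (u : Fin n → ℂ) (z : ℂ) (i : Fin n) :
    ‖Uzf u z i‖
      = ‖u i‖ * Real.exp ((1 - z.re) * Real.log (‖u i‖)) := by
  rw [Uzf, norm_mul, Complex.norm_exp]
  congr 2
  simp [Complex.mul_re]

lemma abs_Uzf_re_zero {n : ℕ} (u : Fin n → ℂ) (z : ℂ) (hz : z.re = 0) (i : Fin n) :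
    ‖Uzf u z i‖ = ‖u i‖ ^ 2 := by
  rw [abs_Uzf, hz]
  rcases eq_or_lt_of_le (norm_nonneg (u i)) with h0 | h0
  · rw [← h0]; simp
  · rw [sub_zero, one_mul, Real.exp_log h0]; ring

lemma abs_Uzf_re_one {n : ℕ} (u : Fin n → ℂ) (z : ℂ) (hz : z.re = 1) (i : Fin n) :
    ‖Uzf u z i‖ = ‖u i‖ := by
  rw [abs_Uzf, hz]; simp

lemma abs_Uzf_le {n : ℕ} (u : Fin n → ℂ) (z : ℂ) (h0 : 0 ≤ z.re) (h1 : z.re ≤ 1)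
    (i : Fin n) :
    ‖Uzf u z i‖ ≤ ‖u i‖ * (1 + ‖u i‖) := by
  rw [abs_Uzf]
  apply mul_le_mul_of_nonneg_left _ (norm_nonneg (u i))
  exact exp_interp (norm_nonneg (u i)) (by linarith) (by linarith)

lemma hasDerivAt_Uzf {n : ℕ} (u : Fin n → ℂ) (i : Fin n) :
    HasDerivAt (fun z => Uzf u z i)
      (-(Real.log (‖u i‖) : ℂ) * u i) 1 := by
  have h1 : HasDerivAt (fun z : ℂ => (1 - z) * (Real.log (‖u i‖) : ℂ))
      (-(Real.log (‖u i‖) : ℂ)) 1 := by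
    simpa using (((hasDerivAt_id (1:ℂ)).const_sub 1).mul_const
      ((Real.log (‖u i‖) : ℂ)))
  have h2 := h1.cexp
  have h3 := h2.const_mul (u i)
  refine h3.congr_deriv ?_
  simp only [sub_self, zero_mul, Complex.exp_zero, one_mul]
  ring

lemma differentiable_Uzf {n : ℕ} (u : Fin n → ℂ) (i : Fin n) :
    Differentiable ℂ (fun z => Uzf u z i) := by
  apply Differentiable.const_mul
  apply Differentiable.cexp
  apply Differentiable.mul_const
  exact (differentiable_const _).sub differentiable_id

end QSHB5

namespace QSHBCore
open QSHB QSHB4 QSHB5 Complex.HadamardThreeLines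

lemma core {n m : ℕ} (hn : 0 < n) (hm : 0 < m)
    (d : Fin n → ℝ) (τ : Fin m → ℝ) (hd : ∀ i, 0 < d i) (hτ : ∀ j, 0 < τ j)
    (k : ℝ) (hk : 0 < k)
    (F : (Fin n → ℂ) →ₗ[ℂ] (Fin m → ℂ)) (G : (Fin m → ℂ) →ₗ[ℂ] (Fin n → ℂ))
    (hadj : IsAdjointPair d τ F G)
    (hF1 : ∀ x, inorm (F x) ≤ wnorm d 1 x)
    (hiso : ∀ y, G (F y) = (k : ℂ) • y)
    (u : Fin n → ℂ) (hu : ∑ i, d i * ‖u i‖ ^ 2 = 1) :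
    Real.log k ≤ went d u + went τ ((Real.sqrt k : ℂ)⁻¹ • F u) := by
  haveI : Nonempty (Fin m) := Fin.pos_iff_nonempty.mp hm
  set sk := Real.sqrt k with hskdef
  have hsk : 0 < sk := Real.sqrt_pos.mpr hk
  have hsk2 : sk ^ 2 = k := Real.sq_sqrt hk.le
  have hskC : ((sk : ℝ) : ℂ) ≠ 0 := by exact_mod_cast hsk.ne'
  set v : Fin m → ℂ := ((sk : ℝ) : ℂ)⁻¹ • F u with hvdef
  have habs0 : ∀ z : ℂ, (0:ℝ) ≤ ‖z‖ := fun z => norm_nonneg z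
  have hFu : ∀ j, F u j = ((sk : ℝ) : ℂ) * v j := by
    intro j
    rw [hvdef]
    simp only [Pi.smul_apply, smul_eq_mul]
    field_simp
  have habsv : ∀ j, ‖v j‖ = ‖F u j‖ / sk := by
    intro j
    rw [hvdef]
    simp only [Pi.smul_apply, smul_eq_mul, norm_mul, norm_inv, Complex.norm_real, Real.norm_eq_abs,
      abs_of_pos hsk]
    ring
  have hv2 : ∑ j, τ j * ‖v j‖ ^ 2 = 1 := by
    have h1 := plancherel hadj hiso u
    rw [hu, mul_one] at h1
    calc ∑ j, τ j * ‖v j‖ ^ 2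
        = ∑ j, τ j * ‖F u j‖ ^ 2 / k := by
          apply Finset.sum_congr rfl
          intro j _
          rw [habsv j, div_pow, hsk2]
          ring
      _ = 1 := by rw [← Finset.sum_div, h1, div_self hk.ne']
  -- the analytic function
  set vc : Fin m → ℂ := fun j => (starRingEnd ℂ) (v j) with hvcdef
  have habsvc : ∀ j, ‖vc j‖ = ‖v j‖ := by
    intro j; rw [hvcdef]; exact Complex.norm_conj _
  set Φ : ℂ → ℂ := fun z => ∑ j, (τ j : ℂ) * F (Uzf u z) j * Uzf vc z j with hΦdef
  -- pointwise bound on |Φ|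
  have habsΦ : ∀ z, ‖Φ z‖
      ≤ ∑ j, τ j * ‖F (Uzf u z) j‖ * ‖Uzf vc z j‖ := by
    intro z
    rw [hΦdef]
    refine le_trans (norm_sum_le _ _) ?_
    apply le_of_eq
    apply Finset.sum_congr rfl
    intro j _
    rw [norm_mul, norm_mul, Complex.norm_real, Real.norm_eq_abs, abs_of_pos (hτ j)]
  have hFabs_le : ∀ (y : Fin n → ℂ) (j : Fin m),
      ‖F y j‖ ≤ ∑ i, d i * ‖y i‖ := by
    intro y j
    refine le_trans (le_inorm (F y) j) ?_
    have := hF1 y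
    rwa [wnorm_one_eq] at this
  -- boundary bound at re = 0
  have hbd0 : ∀ z : ℂ, z.re = 0 → ‖Φ z‖ ≤ 1 := by
    intro z hz
    refine le_trans (habsΦ z) ?_
    have hFle : ∀ j : Fin m, ‖F (Uzf u z) j‖ ≤ 1 := by
      intro j
      refine le_trans (hFabs_le _ j) ?_
      apply le_of_eq
      rw [← hu]
      apply Finset.sum_congr rfl
      intro i _
      rw [abs_Uzf_re_zero u z hz i]
    calc ∑ j, τ j * ‖F (Uzf u z) j‖ * ‖Uzf vc z j‖
        ≤ ∑ j, τ j * ‖v j‖ ^ 2 := by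
          apply Finset.sum_le_sum
          intro j _
          rw [abs_Uzf_re_zero vc z hz j, habsvc j]
          calc τ j * ‖F (Uzf u z) j‖ * ‖v j‖ ^ 2
              ≤ τ j * 1 * ‖v j‖ ^ 2 := by
                apply mul_le_mul_of_nonneg_right _ (sq_nonneg _)
                exact mul_le_mul_of_nonneg_left (hFle j) (hτ j).le
            _ = τ j * ‖v j‖ ^ 2 := by ring
      _ = 1 := hv2
  -- boundary bound at re = 1
  have hbd1 : ∀ z : ℂ, z.re = 1 → ‖Φ z‖ ≤ sk := by
    intro z hz
    refine le_trans (habsΦ z) ?_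
    set S := ∑ j, τ j * ‖F (Uzf u z) j‖ * ‖Uzf vc z j‖ with hSdef
    have hS0 : 0 ≤ S := by
      rw [hSdef]
      apply Finset.sum_nonneg
      intro j _
      exact mul_nonneg (mul_nonneg (hτ j).le (habs0 _)) (habs0 _)
    have hplanU : ∑ j, τ j * ‖F (Uzf u z) j‖ ^ 2 = k := by
      rw [plancherel hadj hiso (Uzf u z)]
      have : ∑ i, d i * ‖Uzf u z i‖ ^ 2 = 1 := by
        rw [← hu]
        apply Finset.sum_congr rfl
        intro i _
        rw [abs_Uzf_re_one u z hz i]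
      rw [this, mul_one]
    have hCS := Finset.sum_mul_sq_le_sq_mul_sq Finset.univ
      (fun j => Real.sqrt (τ j) * ‖F (Uzf u z) j‖)
      (fun j => Real.sqrt (τ j) * ‖v j‖)
    have e1 : ∑ j, (Real.sqrt (τ j) * ‖F (Uzf u z) j‖)
        * (Real.sqrt (τ j) * ‖v j‖) = S := by
      rw [hSdef]
      apply Finset.sum_congr rfl
      intro j _
      rw [abs_Uzf_re_one vc z hz j, habsvc j]
      rw [show (Real.sqrt (τ j) * ‖F (Uzf u z) j‖)
          * (Real.sqrt (τ j) * ‖v j‖)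
          = (Real.sqrt (τ j) * Real.sqrt (τ j)) * ‖F (Uzf u z) j‖
            * ‖v j‖ by ring, Real.mul_self_sqrt (hτ j).le]
    have e2 : ∑ j, (Real.sqrt (τ j) * ‖F (Uzf u z) j‖) ^ 2 = k := by
      rw [← hplanU]
      apply Finset.sum_congr rfl
      intro j _
      rw [mul_pow, Real.sq_sqrt (hτ j).le]
    have e3 : ∑ j, (Real.sqrt (τ j) * ‖v j‖) ^ 2 = 1 := by
      rw [← hv2]
      apply Finset.sum_congr rfl
      intro j _
      rw [mul_pow, Real.sq_sqrt (hτ j).le]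
    rw [e1, e2, e3, mul_one] at hCS
    calc S = Real.sqrt (S ^ 2) := (Real.sqrt_sq hS0).symm
      _ ≤ Real.sqrt k := Real.sqrt_le_sqrt hCS
      _ = sk := rfl
  -- differentiability
  have hdiffΦ : Differentiable ℂ Φ := by
    rw [hΦdef]
    apply Differentiable.fun_sum
    intro j _
    apply Differentiable.mul
    · apply Differentiable.const_mul
      have : (fun z => F (Uzf u z) j)
          = fun z => ∑ i, Uzf u z i * F (Pi.single i 1) j := by
        funext z; exact hFcoord F (Uzf u z) j
      rw [this]
      apply Differentiable.fun_sum
      intro i _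
      exact (differentiable_Uzf u i).mul_const _
    · exact differentiable_Uzf vc j
  -- global bound on the strip
  have hBdd : BddAbove ((norm ∘ Φ) '' (verticalClosedStrip 0 1)) := by
    refine ⟨(∑ i, d i * (‖u i‖ * (1 + ‖u i‖)))
      * (∑ j, τ j * (‖v j‖ * (1 + ‖v j‖))), ?_⟩
    rintro r ⟨z, hz, rfl⟩
    simp only [Function.comp_apply]
    have hz0 : 0 ≤ z.re := hz.1
    have hz1 : z.re ≤ 1 := hz.2
    refine le_trans (habsΦ z) ?_
    have hA : ∀ j, ‖F (Uzf u z) j‖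
        ≤ ∑ i, d i * (‖u i‖ * (1 + ‖u i‖)) := by
      intro j
      refine le_trans (hFabs_le _ j) ?_
      apply Finset.sum_le_sum
      intro i _
      exact mul_le_mul_of_nonneg_left (abs_Uzf_le u z hz0 hz1 i) (hd i).le
    have hA0 : 0 ≤ ∑ i, d i * (‖u i‖ * (1 + ‖u i‖)) := by
      apply Finset.sum_nonneg
      intro i _
      have h := habs0 (u i)
      exact mul_nonneg (hd i).le (mul_nonneg h (by linarith))
    calc ∑ j, τ j * ‖F (Uzf u z) j‖ * ‖Uzf vc z j‖
        ≤ ∑ j, (∑ i, d i * (‖u i‖ * (1 + ‖u i‖)))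
            * (τ j * (‖v j‖ * (1 + ‖v j‖))) := by
          apply Finset.sum_le_sum
          intro j _
          have h1 : ‖Uzf vc z j‖ ≤ ‖v j‖ * (1 + ‖v j‖) := by
            have := abs_Uzf_le vc z hz0 hz1 j
            rwa [habsvc j] at this
          calc τ j * ‖F (Uzf u z) j‖ * ‖Uzf vc z j‖
              ≤ τ j * ((∑ i, d i * (‖u i‖ * (1 + ‖u i‖)))
                  * (‖v j‖ * (1 + ‖v j‖))) := by
                rw [mul_assoc]
                apply mul_le_mul_of_nonneg_left _ (hτ j).le
                apply mul_le_mul (hA j) h1 (habs0 _) hA0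
            _ = (∑ i, d i * (‖u i‖ * (1 + ‖u i‖)))
                * (τ j * (‖v j‖ * (1 + ‖v j‖))) := by ring
      _ = _ := by rw [← Finset.mul_sum]
  -- three lines
  have hTL : ∀ t : ℝ, 0 ≤ t → t ≤ 1 → ‖Φ t‖ ≤ sk ^ t := by
    intro t ht0 ht1
    have hmem : (t : ℂ) ∈ verticalClosedStrip 0 1 := by
      simp only [verticalClosedStrip, Set.mem_preimage, Complex.ofReal_re, Set.mem_Icc]
      exact ⟨ht0, ht1⟩
    have := norm_le_interp_of_mem_verticalClosedStrip₀₁' Φ hmem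
      hdiffΦ.diffContOnCl hBdd (fun z hz => by
        exact hbd0 z hz)
      (fun z hz => by exact hbd1 z hz)
    rw [Complex.ofReal_re, Real.one_rpow] at this
    simpa using this
  -- value at 1
  have hvconj : ∀ j, v j * vc j = ((‖v j‖ ^ 2 : ℝ) : ℂ) := by
    intro j
    rw [hvcdef, Complex.mul_conj, Complex.sq_norm]
  have hΦ1 : Φ 1 = ((sk : ℝ) : ℂ) := by
    rw [hΦdef]
    simp only [Uzf_one]
    have e : ∀ j, (τ j : ℂ) * F u j * vc j
        = ((sk:ℝ):ℂ) * ((τ j * ‖v j‖ ^ 2 : ℝ) : ℂ) := by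
      intro j
      rw [hFu j]
      calc (τ j : ℂ) * (((sk:ℝ):ℂ) * v j) * vc j
          = ((sk:ℝ):ℂ) * ((τ j : ℂ) * (v j * vc j)) := by ring
        _ = _ := by rw [hvconj j]; push_cast; ring
    rw [Finset.sum_congr rfl (fun j _ => e j), ← Finset.mul_sum]
    have e2 : ∑ j, ((τ j * ‖v j‖ ^ 2 : ℝ) : ℂ)
        = ((∑ j, τ j * ‖v j‖ ^ 2 : ℝ) : ℂ) := by
      rw [Complex.ofReal_sum]
    rw [e2, hv2]
    simp
  -- derivative of Φ at 1
  set du : Fin n → ℂ := fun i => -(Real.log (‖u i‖) : ℂ) * u i with hdudef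
  have hderivF : ∀ j, HasDerivAt (fun z => F (Uzf u z) j) (F du j) 1 := by
    intro j
    have h1 : HasDerivAt (fun z => ∑ i, Uzf u z i * F (Pi.single i 1) j)
        (∑ i, du i * F (Pi.single i 1) j) 1 := by
      apply HasDerivAt.fun_sum
      intro i _
      exact (hasDerivAt_Uzf u i).mul_const _
    have e : (fun z => F (Uzf u z) j) = fun z => ∑ i, Uzf u z i * F (Pi.single i 1) j := by
      funext z; exact hFcoord F (Uzf u z) j
    rw [e, hFcoord F du j]
    exact h1
  set D : ℂ := ∑ j, (τ j : ℂ) * (F du j * vc j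
      + F u j * (-(Real.log (‖v j‖) : ℂ) * vc j)) with hDdef
  have hderivΦ : HasDerivAt Φ D 1 := by
    rw [hΦdef, hDdef]
    apply HasDerivAt.fun_sum
    intro j _
    have hW : HasDerivAt (fun z => Uzf vc z j)
        (-(Real.log (‖v j‖) : ℂ) * vc j) 1 := by
      have h := hasDerivAt_Uzf vc j
      rwa [habsvc j] at h
    have h2 := ((hderivF j).mul hW).const_mul ((τ j : ℂ))
    have e : (fun z => (τ j : ℂ) * F (Uzf u z) j * Uzf vc z j)
        = fun z => (τ j : ℂ) * (F (Uzf u z) j * Uzf vc z j) := by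
      funext z; ring
    rw [e]
    refine h2.congr_deriv ?_
    simp only [Uzf_one]
    try ring
  -- closed form for D
  have hGv : G v = fun i => ((sk:ℝ):ℂ) * u i := by
    rw [hvdef, map_smul, hiso u]
    funext i
    simp only [Pi.smul_apply, smul_eq_mul]
    rw [← mul_assoc]
    congr 1
    rw [show ((k:ℝ):ℂ) = ((sk:ℝ):ℂ) * ((sk:ℝ):ℂ) by
      exact_mod_cast congrArg Complex.ofReal (by nlinarith : (k:ℝ) = sk * sk)]
    field_simp
  have hreal_u : ∑ i, d i * ‖u i‖^2 * Real.log (‖u i‖^2)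
      = ∑ i, 2 * (d i * ‖u i‖^2 * Real.log (‖u i‖)) := by
    apply Finset.sum_congr rfl
    intro i _
    rw [Real.log_pow]
    push_cast
    ring
  have hreal_v : ∑ j, τ j * ‖v j‖^2 * Real.log (‖v j‖^2)
      = ∑ j, 2 * (τ j * ‖v j‖^2 * Real.log (‖v j‖)) := by
    apply Finset.sum_congr rfl
    intro j _
    rw [Real.log_pow]
    push_cast
    ring
  have hT1 : ∑ j, (τ j : ℂ) * (F du j * vc j) = ((sk * (went d u / 2) : ℝ) : ℂ) := by
    have h1 : ∑ j, (τ j : ℂ) * F du j * (starRingEnd ℂ) (v j)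
        = ∑ i, (d i : ℂ) * du i * (starRingEnd ℂ) (G v i) := hadj' hadj du v
    have e0 : ∑ j, (τ j : ℂ) * (F du j * vc j)
        = ∑ j, (τ j : ℂ) * F du j * (starRingEnd ℂ) (v j) := by
      apply Finset.sum_congr rfl
      intro j _
      rw [hvcdef]; ring
    rw [e0, h1, hGv]
    have e : ∀ i, (d i : ℂ) * du i * (starRingEnd ℂ) (((sk:ℝ):ℂ) * u i)
        = ((sk * (-Real.log (‖u i‖) * d i) * ‖u i‖^2 : ℝ) : ℂ) := by
      intro i
      rw [hdudef, map_mul, Complex.conj_ofReal]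
      calc (d i : ℂ) * (-(Real.log (‖u i‖) : ℂ) * u i)
            * (((sk:ℝ):ℂ) * (starRingEnd ℂ) (u i))
          = ((sk:ℝ):ℂ) * (-(Real.log (‖u i‖):ℂ) * (d i:ℂ))
            * ((starRingEnd ℂ) (u i) * u i) := by ring
        _ = _ := by rw [conj_mul_self]; push_cast; ring
    rw [Finset.sum_congr rfl (fun i _ => e i), ← Complex.ofReal_sum]
    congr 1
    rw [went, hreal_u]
    rw [← Finset.mul_sum]
    have e3 : ∑ i, sk * (-Real.log (‖u i‖) * d i) * ‖u i‖^2
        = sk * ∑ i, -(d i * ‖u i‖^2 * Real.log (‖u i‖)) := by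
      rw [Finset.mul_sum]
      apply Finset.sum_congr rfl
      intro i _
      ring
    rw [e3, Finset.sum_neg_distrib]
    ring
  have hT2 : ∑ j, (τ j : ℂ) * (F u j * (-(Real.log (‖v j‖) : ℂ) * vc j))
      = ((sk * (went τ v / 2) : ℝ) : ℂ) := by
    have e : ∀ j, (τ j:ℂ) * (F u j * (-(Real.log (‖v j‖):ℂ) * vc j))
        = ((sk * (-Real.log (‖v j‖) * τ j) * ‖v j‖^2 : ℝ) : ℂ) := by
      intro j
      rw [hFu j]
      calc (τ j:ℂ) * ((((sk:ℝ):ℂ) * v j) * (-(Real.log (‖v j‖):ℂ) * vc j))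
          = ((sk:ℝ):ℂ) * (-(Real.log (‖v j‖):ℂ) * (τ j:ℂ)) * (v j * vc j) := by ring
        _ = _ := by rw [hvconj j]; push_cast; ring
    rw [Finset.sum_congr rfl (fun j _ => e j), ← Complex.ofReal_sum]
    congr 1
    rw [went, hreal_v]
    have e3 : ∑ j, sk * (-Real.log (‖v j‖) * τ j) * ‖v j‖^2
        = sk * ∑ j, -(τ j * ‖v j‖^2 * Real.log (‖v j‖)) := by
      rw [Finset.mul_sum]
      apply Finset.sum_congr rfl
      intro j _
      ring
    rw [e3, Finset.sum_neg_distrib, ← Finset.mul_sum]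
    ring
  have hDval : D = ((sk * ((went d u + went τ v) / 2) : ℝ) : ℂ) := by
    rw [hDdef]
    rw [Finset.sum_congr rfl (fun j _ => mul_add ((τ j:ℂ)) _ _), Finset.sum_add_distrib,
      hT1, hT2]
    push_cast
    ring
  -- the real function ψ
  have hg : HasDerivAt (fun t : ℝ => Φ (t:ℂ)) D 1 := by
    apply HasDerivAt.comp_ofReal
    rw [Complex.ofReal_one]
    exact hderivΦ
  have hΦ1' : Φ ((1:ℝ):ℂ) = ((sk:ℝ):ℂ) := by rw [Complex.ofReal_one, hΦ1]
  have hgre : HasDerivAt (fun t : ℝ => (Φ (t:ℂ)).re) D.re 1 := by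
    have h := (Complex.reCLM.hasFDerivAt (x := Φ ((1:ℝ):ℂ))).comp_hasDerivAt 1 hg
    exact h
  have hgim : HasDerivAt (fun t : ℝ => (Φ (t:ℂ)).im) D.im 1 := by
    have h := (Complex.imCLM.hasFDerivAt (x := Φ ((1:ℝ):ℂ))).comp_hasDerivAt 1 hg
    exact h
  have hnsq : HasDerivAt (fun t : ℝ => Complex.normSq (Φ (t:ℂ)))
      (D.re * (Φ ((1:ℝ):ℂ)).re + (Φ ((1:ℝ):ℂ)).re * D.re
        + (D.im * (Φ ((1:ℝ):ℂ)).im + (Φ ((1:ℝ):ℂ)).im * D.im)) 1 := by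
    have e : (fun t : ℝ => Complex.normSq (Φ (t:ℂ)))
        = fun t : ℝ => (Φ (t:ℂ)).re * (Φ (t:ℂ)).re + (Φ (t:ℂ)).im * (Φ (t:ℂ)).im := by
      funext t
      rw [Complex.normSq_apply]
    rw [e]
    exact (hgre.mul hgre).add (hgim.mul hgim)
  have hne : Complex.normSq (Φ ((1:ℝ):ℂ)) ≠ 0 := by
    rw [hΦ1']
    simp only [Complex.normSq_ofReal]
    positivity
  have hlogd := (Real.hasDerivAt_log hne).comp 1 hnsq
  have hlin : HasDerivAt (fun t : ℝ => t * Real.log k) (Real.log k) 1 := by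
    simpa using (hasDerivAt_id (1:ℝ)).mul_const (Real.log k)
  set ψ : ℝ → ℝ := fun t => Real.log (Complex.normSq (Φ (t:ℂ))) - t * Real.log k with hψdef
  have hψderiv : HasDerivAt ψ (went d u + went τ v - Real.log k) 1 := by
    have h := hlogd.sub hlin
    refine h.congr_deriv ?_
    rw [hΦ1', hDval]
    simp only [Complex.ofReal_re, Complex.ofReal_im, Complex.normSq_ofReal, Function.comp]
    have hsk2' : sk * sk = k := by nlinarith
    field_simp
    ring
  have hψ1 : ψ 1 = 0 := by
    rw [hψdef]
    simp only [Complex.ofReal_one, hΦ1, Complex.normSq_ofReal]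
    rw [show sk * sk = k by nlinarith]
    ring
  have hslope := hasDerivAt_iff_tendsto_slope.mp hψderiv
  have hmono : (nhdsWithin (1:ℝ) (Set.Iio 1)) ≤ (nhdsWithin (1:ℝ) {(1:ℝ)}ᶜ) :=
    nhdsWithin_mono _ (fun y hy => ne_of_lt hy)
  have hev1 : ∀ᶠ (t:ℝ) in nhdsWithin (1:ℝ) (Set.Iio 1), Φ (t:ℂ) ≠ 0 := by
    have hc : ContinuousAt (fun t : ℝ => Φ (t:ℂ)) 1 := hg.continuousAt
    have hne0 : Φ ((1:ℝ):ℂ) ≠ 0 := by rw [hΦ1']; exact hskC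
    exact (hc.eventually_ne hne0).filter_mono nhdsWithin_le_nhds
  have hev2 : ∀ᶠ t in nhdsWithin (1:ℝ) (Set.Iio 1), t ∈ Set.Ioo (0:ℝ) 1 :=
    Ioo_mem_nhdsLT_of_mem (by norm_num : (1:ℝ) ∈ Set.Ioc 0 1)
  have hev : ∀ᶠ t in nhdsWithin (1:ℝ) (Set.Iio 1), 0 ≤ slope ψ 1 t := by
    filter_upwards [hev1, hev2] with t hΦt ht
    have hψt : ψ t ≤ 0 := by
      simp only [hψdef]
      have habs := hTL t ht.1.le ht.2.le
      have hpos : 0 < ‖Φ (t:ℂ)‖ := norm_pos_iff.mpr hΦt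
      have hb : Real.log (‖Φ (t:ℂ)‖) ≤ t * (Real.log k / 2) := by
        calc Real.log (‖Φ (t:ℂ)‖)
            ≤ Real.log (sk ^ t) := Real.log_le_log hpos habs
          _ = t * Real.log sk := Real.log_rpow hsk t
          _ = t * (Real.log k / 2) := by rw [hskdef, Real.log_sqrt hk.le]
      have hnseq : Complex.normSq (Φ (t:ℂ)) = ‖Φ (t:ℂ)‖ ^ 2 :=
        (Complex.sq_norm _).symm
      rw [hnseq, Real.log_pow]
      push_cast
      linarith
    rw [slope_def_field, hψ1, sub_zero]
    apply div_nonneg_of_nonpos hψt (by linarith [ht.2])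
  have hfinal : (0:ℝ) ≤ went d u + went τ v - Real.log k :=
    ge_of_tendsto (hslope.mono_left hmono) hev
  rw [hvdef] at hfinal
  linarith [hfinal]


end QSHBCore

namespace QSHBMain
open QSHB QSHB2 QSHB3 QSHB4 QSHB5 QSHBCore

lemma went_smul {n : ℕ} (d : Fin n → ℝ) (c : ℝ) (hc : 0 < c) (y : Fin n → ℂ) :
    went d ((c:ℂ) • y) = c^2 * went d y
      - c^2 * Real.log (c^2) * ∑ i, d i * ‖y i‖^2 := by
  rw [went, went]
  have e : ∀ i, d i * ‖((c:ℂ) • y) i‖^2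
        * Real.log (‖((c:ℂ) • y) i‖^2)
      = c^2 * (d i * ‖y i‖^2 * Real.log (‖y i‖^2))
        + c^2 * Real.log (c^2) * (d i * ‖y i‖^2) := by
    intro i
    have habs : ‖((c:ℂ) • y) i‖ = c * ‖y i‖ := by
      simp [Pi.smul_apply, norm_mul, Complex.norm_real, Real.norm_eq_abs, abs_of_pos hc]
    rw [habs]
    rcases eq_or_ne (y i) 0 with h0 | h0
    · simp [h0]
    · have hy0 : 0 < ‖y i‖ := norm_pos_iff.mpr h0
      rw [mul_pow, Real.log_mul (by positivity) (by positivity)]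
      ring
  rw [Finset.sum_congr rfl (fun i _ => e i), Finset.sum_add_distrib,
    ← Finset.mul_sum, ← Finset.mul_sum]
  ring

theorem quantum_smooth_hirschman_beckner {n m : ℕ} (hn : 0 < n) (hm : 0 < m)
    (d : Fin n → ℝ) (τ : Fin m → ℝ) (hd : ∀ i, 0 < d i) (hτ : ∀ j, 0 < τ j)
    (hd1 : ∀ i, 1 ≤ d i) (hτ1 : ∀ j, 1 ≤ τ j)
    (k : ℝ) (hk : 0 < k)
    (F : (Fin n → ℂ) →ₗ[ℂ] (Fin m → ℂ)) (G : (Fin m → ℂ) →ₗ[ℂ] (Fin n → ℂ))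
    (hadj : IsAdjointPair d τ F G)
    (hF1 : ∀ x, inorm (F x) ≤ wnorm d 1 x)
    (hFk : ∀ x, k * inorm x ≤ inorm (G (F x)))
    (hiso : ∀ y, G (F y) = (k : ℂ) • y)
    (x : Fin n → ℂ) (hx : x ≠ 0)
    (ε η : ℝ) (hε : ε ∈ Set.Icc (0:ℝ) 1) (hη : η ∈ Set.Icc (0:ℝ) 1)
    (p q : ℝ) (hp : 1 ≤ p) (hq : 1 ≤ q) :
    smoothEnt d p ε x / (wnorm d 2 x) ^ 2 + smoothEnt τ q η (F x) / (wnorm τ 2 (F x)) ^ 2 ≥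
      -4 * Real.log (wnorm d 2 x)
      - ((4 * (inorm x + 1) * Real.log (inorm x + 1) + 2 * (inorm x + 1)) / (wnorm d 2 x) ^ 2)
          * (⨅ i, d i) ^ (-(1 / p)) * (∑ i, d i) * ε
      - ((4 * (inorm (F x) + 1) * Real.log (inorm (F x) + 1) + 2 * (inorm (F x) + 1))
            / (wnorm τ 2 (F x)) ^ 2)
          * (⨅ j, τ j) ^ (-(1 / q)) * (∑ j, τ j) * η := by
  have habs0 : ∀ z : ℂ, (0:ℝ) ≤ ‖z‖ := fun z => norm_nonneg z
  set N := wnorm d 2 x with hNdef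
  have hN : 0 < N := wnorm_two_pos d hd x hx
  have hN2 : N ^ 2 = ∑ i, d i * ‖x i‖ ^ 2 :=
    wnorm_two_sq d (fun i => (hd i).le) x
  have hNC : ((N:ℝ):ℂ) ≠ 0 := by exact_mod_cast hN.ne'
  have hFx0 : F x ≠ 0 := by
    intro h0
    apply hx
    have h1 := hiso x
    rw [h0, map_zero] at h1
    have h2 := h1.symm
    rw [smul_eq_zero] at h2
    rcases h2 with h2 | h2
    · exact absurd h2 (by exact_mod_cast hk.ne')
    · exact h2
  set M := wnorm τ 2 (F x) with hMdef
  have hM : 0 < M := wnorm_two_pos τ hτ (F x) hFx0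
  have hM2 : M ^ 2 = k * N ^ 2 := by
    rw [hN2, wnorm_two_sq τ (fun j => (hτ j).le) (F x)]
    exact plancherel hadj hiso x
  have hsk : 0 < Real.sqrt k := Real.sqrt_pos.mpr hk
  have hM_eq : M = Real.sqrt k * N := by
    have h1 : M = Real.sqrt (k * N ^ 2) := by rw [← hM2, Real.sqrt_sq hM.le]
    rw [h1, Real.sqrt_mul hk.le, Real.sqrt_sq hN.le]
  -- normalized vector u
  set u : Fin n → ℂ := ((N:ℝ):ℂ)⁻¹ • x with hudef
  have hux : x = ((N:ℝ):ℂ) • u := by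
    rw [hudef, smul_smul]
    rw [mul_inv_cancel₀ hNC, one_smul]
  have habsu : ∀ i, ‖u i‖ ^ 2 = ‖x i‖ ^ 2 / N ^ 2 := by
    intro i
    rw [hudef]
    simp only [Pi.smul_apply, smul_eq_mul, norm_mul, norm_inv, Complex.norm_real, Real.norm_eq_abs,
      abs_of_pos hN]
    rw [mul_pow, inv_pow]
    ring
  have hu1 : ∑ i, d i * ‖u i‖ ^ 2 = 1 := by
    rw [Finset.sum_congr rfl (fun i _ => by rw [habsu i])]
    have e : ∑ i, d i * (‖x i‖ ^ 2 / N ^ 2)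
        = (∑ i, d i * ‖x i‖ ^ 2) / N ^ 2 := by
      rw [Finset.sum_div]
      apply Finset.sum_congr rfl
      intro i _
      ring
    rw [e, ← hN2, div_self (by positivity)]
  set v : Fin m → ℂ := ((Real.sqrt k : ℝ):ℂ)⁻¹ • F u with hvdef
  have hcore := core hn hm d τ hd hτ k hk F G hadj hF1 hiso u hu1
  rw [← hvdef] at hcore
  -- F x = M • v
  have hskC : ((Real.sqrt k : ℝ):ℂ) ≠ 0 := by exact_mod_cast hsk.ne'
  have hFxv : F x = ((M:ℝ):ℂ) • v := by
    rw [hvdef, smul_smul]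
    conv_lhs => rw [hux, map_smul]
    congr 1
    rw [hM_eq]
    push_cast
    field_simp
  have hv1 : ∑ j, τ j * ‖v j‖ ^ 2 = 1 := by
    have e : ∀ j, τ j * ‖F x j‖^2 = M^2 * (τ j * ‖v j‖^2) := by
      intro j
      rw [hFxv]
      simp only [Pi.smul_apply, smul_eq_mul, norm_mul, Complex.norm_real, Real.norm_eq_abs, abs_of_pos hM]
      rw [mul_pow]
      ring
    have e2 : M^2 = ∑ j, τ j * ‖F x j‖^2 :=
      wnorm_two_sq τ (fun j => (hτ j).le) (F x)
    rw [Finset.sum_congr rfl (fun j _ => e j), ← Finset.mul_sum] at e2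
    have e3 : M^2 * 1 = M^2 * ∑ j, τ j * ‖v j‖^2 := by
      rw [mul_one]; exact e2
    exact (mul_left_cancel₀ (pow_ne_zero 2 hM.ne') e3).symm
  -- scaling identities
  have f3 : went d x = N^2 * went d u - N^2 * Real.log (N^2) := by
    conv_lhs => rw [hux]
    rw [went_smul d N hN u, hu1, mul_one]
  have f4 : went τ (F x) = M^2 * went τ v - M^2 * Real.log (M^2) := by
    conv_lhs => rw [hFxv]
    rw [went_smul τ M hM v, hv1, mul_one]
  -- smoothing bounds
  have hs1 := smooth_bound hn d hd1 p ε hp hε.1 hε.2 x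
  have hs2 := smooth_bound hm τ hτ1 q η hq hη.1 hη.2 (F x)
  set Cx := (4*(inorm x + 1)*Real.log (inorm x + 1) + 2*(inorm x + 1))
      * (⨅ i, d i) ^ (-(1/p)) * (∑ i, d i) * ε with hCxdef
  set Cf := (4*(inorm (F x) + 1)*Real.log (inorm (F x) + 1) + 2*(inorm (F x) + 1))
      * (⨅ j, τ j) ^ (-(1/q)) * (∑ j, τ j) * η with hCfdef
  -- divide by the positive squares
  have hN2pos : (0:ℝ) < N^2 := by positivity
  have hM2pos : (0:ℝ) < M^2 := by positivity
  have g1 : (went d x - Cx) / N^2 ≤ smoothEnt d p ε x / N^2 :=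
    (div_le_div_iff_of_pos_right hN2pos).mpr hs1
  have g2 : (went τ (F x) - Cf) / M^2 ≤ smoothEnt τ q η (F x) / M^2 :=
    (div_le_div_iff_of_pos_right hM2pos).mpr hs2
  have g1' : (went d x - Cx) / N^2 = went d u - Real.log (N^2) - Cx / N^2 := by
    rw [f3]
    field_simp
  have g2' : (went τ (F x) - Cf) / M^2 = went τ v - Real.log (M^2) - Cf / M^2 := by
    rw [f4]
    field_simp
  -- logarithm bookkeeping
  have f6 : Real.log (N^2) = 2 * Real.log N := by
    rw [Real.log_pow]; push_cast; ring
  have f7 : Real.log (M^2) = 2 * Real.log M := by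
    rw [Real.log_pow]; push_cast; ring
  have f8 : Real.log M = Real.log k / 2 + Real.log N := by
    rw [hM_eq, Real.log_mul hsk.ne' hN.ne', Real.log_sqrt hk.le]
  -- rewrite the goal's correction terms
  have e1 : ((4 * (inorm x + 1) * Real.log (inorm x + 1) + 2 * (inorm x + 1)) / N ^ 2)
      * (⨅ i, d i) ^ (-(1 / p)) * (∑ i, d i) * ε = Cx / N^2 := by
    rw [hCxdef]; ring
  have e2 : ((4 * (inorm (F x) + 1) * Real.log (inorm (F x) + 1) + 2 * (inorm (F x) + 1))
      / M ^ 2) * (⨅ j, τ j) ^ (-(1 / q)) * (∑ j, τ j) * η = Cf / M^2 := by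
    rw [hCfdef]; ring
  rw [ge_iff_le, e1, e2]
  rw [g1'] at g1
  rw [g2'] at g2
  linarith [hcore, g1, g2, f6, f7, f8]

end QSHBMain


/-- Quantum smooth Hirschman-Beckner uncertainty principle,
commutative finite-dimensional case. -/
theorem quantum_smooth_hirschman_beckner {n m : ℕ} (hn : 0 < n) (hm : 0 < m)
    (d : Fin n → ℝ) (τ : Fin m → ℝ) (hd : ∀ i, 0 < d i) (hτ : ∀ j, 0 < τ j)
    (hd1 : ∀ i, 1 ≤ d i) (hτ1 : ∀ j, 1 ≤ τ j)
    (k : ℝ) (hk : 0 < k)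
    (F : (Fin n → ℂ) →ₗ[ℂ] (Fin m → ℂ)) (G : (Fin m → ℂ) →ₗ[ℂ] (Fin n → ℂ))
    (hadj : IsAdjointPair d τ F G)
    (hF1 : ∀ x, inorm (F x) ≤ wnorm d 1 x)
    (hFk : ∀ x, k * inorm x ≤ inorm (G (F x)))
    (hiso : ∀ y, G (F y) = (k : ℂ) • y)
    (x : Fin n → ℂ) (hx : x ≠ 0)
    (ε η : ℝ) (hε : ε ∈ Set.Icc (0:ℝ) 1) (hη : η ∈ Set.Icc (0:ℝ) 1)
    (p q : ℝ) (hp : 1 ≤ p) (hq : 1 ≤ q) :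
    smoothEnt d p ε x / (wnorm d 2 x) ^ 2 + smoothEnt τ q η (F x) / (wnorm τ 2 (F x)) ^ 2 ≥
      -4 * Real.log (wnorm d 2 x)
      - ((4 * (inorm x + 1) * Real.log (inorm x + 1) + 2 * (inorm x + 1)) / (wnorm d 2 x) ^ 2)
          * (⨅ i, d i) ^ (-(1 / p)) * (∑ i, d i) * ε
      - ((4 * (inorm (F x) + 1) * Real.log (inorm (F x) + 1) + 2 * (inorm (F x) + 1))
            / (wnorm τ 2 (F x)) ^ 2)
          * (⨅ j, τ j) ^ (-(1 / q)) * (∑ j, τ j) * η := by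
  exact QSHBMain.quantum_smooth_hirschman_beckner hn hm d τ hd hτ hd1 hτ1 k hk F G hadj
    hF1 hFk hiso x hx ε η hε hη p q hp hq
end

section
/- Weyl-type inequality for singular values: for any two matrices A, B ∈ Matrix (Fin n) (Fin n) ℂ and every index i, |σ(A) i − σ(B) i| ≤ ‖A − B‖, where σ(A) denotes the decreasing sequence of singular values of A and ‖·‖ is the ℓ² → ℓ² operator norm. -/
set_option maxHeartbeats 1000000

open Finset

/-- The `ℓ² → ℓ²` operator norm of a matrix, via its action on Euclidean space. -/
noncomputable def matOpNorm {n : ℕ} (A : Matrix (Fin n) (Fin n) ℂ) : ℝ :=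
  ‖Matrix.toEuclideanCLM (𝕜 := ℂ) A‖

/-- The singular values of `A` (square roots of the eigenvalues of `Aᴴ * A`),
arranged in decreasing order. -/
noncomputable def singVals {n : ℕ} (A : Matrix (Fin n) (Fin n) ℂ) : Fin n → ℝ := fun i =>
  Real.sqrt ((Matrix.isHermitian_conjTranspose_mul_self A).eigenvalues
    (Tuple.sort (Matrix.isHermitian_conjTranspose_mul_self A).eigenvalues i.rev))

section Aux

open Matrix


variable {n : ℕ}

noncomputable def sve (A : Matrix (Fin n) (Fin n) ℂ) : Fin n ≃ Fin n :=
  (Fin.revPerm).trans (Tuple.sort ((Matrix.isHermitian_conjTranspose_mul_self A).eigenvalues))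

noncomputable def svα (A : Matrix (Fin n) (Fin n) ℂ) : Fin n → ℝ :=
  fun i => (Matrix.isHermitian_conjTranspose_mul_self A).eigenvalues (sve A i)

lemma svα_antitone (A : Matrix (Fin n) (Fin n) ℂ) : Antitone (svα A) := by
  intro i j hij
  have h := Tuple.monotone_sort ((Matrix.isHermitian_conjTranspose_mul_self A).eigenvalues)
  exact h (Fin.rev_le_rev.mpr hij)

lemma svα_nonneg (A : Matrix (Fin n) (Fin n) ℂ) (i : Fin n) : 0 ≤ svα A i :=
  Matrix.eigenvalues_conjTranspose_mul_self_nonneg A _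

lemma repr_eq_zero_of_mem_span {ι : Type*}
    (b : OrthonormalBasis (Fin n) ℂ (EuclideanSpace ℂ (Fin n)))
    (f : ι → Fin n) {x : EuclideanSpace ℂ (Fin n)}
    (hx : x ∈ Submodule.span ℂ (Set.range fun k => b (f k)))
    {j : Fin n} (hj : ∀ k, f k ≠ j) : b.repr x j = 0 := by
  induction hx using Submodule.span_induction with
  | mem y hy =>
    obtain ⟨k, rfl⟩ := hy
    rw [OrthonormalBasis.repr_self]
    rw [EuclideanSpace.single_apply]
    simp [Ne.symm (hj k)]
  | zero => simp
  | add u v _ _ h1 h2 => simp [h1, h2]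
  | smul a u _ h1 => simp [h1]

lemma norm_sq_repr (b : OrthonormalBasis (Fin n) ℂ (EuclideanSpace ℂ (Fin n)))
    (x : EuclideanSpace ℂ (Fin n)) : ‖x‖ ^ 2 = ∑ j, ‖b.repr x j‖ ^ 2 := by
  rw [← b.repr.norm_map x, EuclideanSpace.norm_eq, Real.sq_sqrt]
  positivity

noncomputable def lowIdx (A : Matrix (Fin n) (Fin n) ℂ) (i : Fin n)
    (k : Fin (i.val + 1)) : Fin n := sve A (Fin.castLE i.isLt k)

noncomputable def highIdx (A : Matrix (Fin n) (Fin n) ℂ) (i : Fin n)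
    (k : Fin (n - i.val)) : Fin n := sve A ⟨i.val + k.val, by omega⟩

lemma lowIdx_injective (A : Matrix (Fin n) (Fin n) ℂ) (i : Fin n) :
    Function.Injective (lowIdx A i) := fun a b h => by
  have := (sve A).injective h
  exact Fin.castLE_injective _ this

lemma highIdx_injective (A : Matrix (Fin n) (Fin n) ℂ) (i : Fin n) :
    Function.Injective (highIdx A i) := fun a b h => by
  have := (sve A).injective h
  simpa [Fin.ext_iff] using this




local notation "⟪" x ", " y "⟫" => @inner ℂ _ _ x y

lemma clm_apply_eigen (A : Matrix (Fin n) (Fin n) ℂ) (j : Fin n) :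
    Matrix.toEuclideanCLM (𝕜 := ℂ) (Aᴴ * A)
      ((Matrix.isHermitian_conjTranspose_mul_self A).eigenvectorBasis j)
      = (Matrix.isHermitian_conjTranspose_mul_self A).eigenvalues j •
        (Matrix.isHermitian_conjTranspose_mul_self A).eigenvectorBasis j := by
  apply (WithLp.equiv 2 _).injective
  simp only [WithLp.equiv_apply, Matrix.ofLp_toEuclideanCLM, Matrix.toLin'_apply, WithLp.ofLp_smul]
  have := (Matrix.isHermitian_conjTranspose_mul_self A).mulVec_eigenvectorBasis j
  convert this using 1

lemma repr_clm_apply (A : Matrix (Fin n) (Fin n) ℂ) (x : EuclideanSpace ℂ (Fin n)) (j : Fin n) :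
    (Matrix.isHermitian_conjTranspose_mul_self A).eigenvectorBasis.repr
        (Matrix.toEuclideanCLM (𝕜 := ℂ) (Aᴴ * A) x) j
      = ((Matrix.isHermitian_conjTranspose_mul_self A).eigenvalues j : ℂ) *
        (Matrix.isHermitian_conjTranspose_mul_self A).eigenvectorBasis.repr x j := by
  set hA := Matrix.isHermitian_conjTranspose_mul_self A
  set b := hA.eigenvectorBasis
  set M := Matrix.toEuclideanCLM (𝕜 := ℂ) (Aᴴ * A)
  have hsa : ContinuousLinearMap.adjoint M = M := by
    rw [← ContinuousLinearMap.star_eq_adjoint]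
    rw [show M = Matrix.toEuclideanCLM (𝕜 := ℂ) (Aᴴ * A) from rfl, ← map_star,
      show star (Aᴴ * A) = Aᴴ * A from hA]
  rw [OrthonormalBasis.repr_apply_apply, OrthonormalBasis.repr_apply_apply,
    ← ContinuousLinearMap.adjoint_inner_left, hsa, clm_apply_eigen,
    RCLike.real_smul_eq_coe_smul (K := ℂ), inner_smul_left]
  simp [Complex.conj_ofReal]
  exact Or.inl rfl

lemma normT_sq (A : Matrix (Fin n) (Fin n) ℂ) (x : EuclideanSpace ℂ (Fin n)) :
    ‖Matrix.toEuclideanCLM (𝕜 := ℂ) A x‖ ^ 2 =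
      ∑ j, (Matrix.isHermitian_conjTranspose_mul_self A).eigenvalues j *
        ‖(Matrix.isHermitian_conjTranspose_mul_self A).eigenvectorBasis.repr x j‖ ^ 2 := by
  set hA := Matrix.isHermitian_conjTranspose_mul_self A
  set b := hA.eigenvectorBasis
  set T := Matrix.toEuclideanCLM (𝕜 := ℂ) A
  have h1 : (‖T x‖ : ℂ) ^ 2 = ⟪T x, T x⟫ := (inner_self_eq_norm_sq_to_K (𝕜 := ℂ) (T x)).symm
  have h2 : ⟪T x, T x⟫ = ⟪Matrix.toEuclideanCLM (𝕜 := ℂ) (Aᴴ * A) x, x⟫ := by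
    have : Matrix.toEuclideanCLM (𝕜 := ℂ) (Aᴴ * A)
        = ContinuousLinearMap.adjoint T * T := by
      rw [← ContinuousLinearMap.star_eq_adjoint, ← map_star, ← _root_.map_mul,
        Matrix.star_eq_conjTranspose]
    rw [this]
    rw [ContinuousLinearMap.mul_apply, ContinuousLinearMap.adjoint_inner_left]
  have h3 : ⟪Matrix.toEuclideanCLM (𝕜 := ℂ) (Aᴴ * A) x, x⟫
      = ∑ j, ((hA.eigenvalues j : ℂ) * (‖b.repr x j‖ : ℂ) ^ 2) := by
    rw [← b.repr.inner_map_map (Matrix.toEuclideanCLM (𝕜 := ℂ) (Aᴴ * A) x) x]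
    rw [PiLp.inner_apply]
    refine Finset.sum_congr rfl fun j _ => ?_
    rw [repr_clm_apply]
    simp only [RCLike.inner_apply]
    rw [_root_.map_mul, Complex.conj_ofReal, mul_left_comm]
    congr 1
    exact RCLike.mul_conj _
  have := h1.trans (h2.trans h3)
  have h4 : ((‖T x‖ ^ 2 : ℝ) : ℂ) = ((∑ j, hA.eigenvalues j * ‖b.repr x j‖ ^ 2 : ℝ) : ℂ) := by
    push_cast
    exact this
  exact_mod_cast h4


lemma lower_bound (A : Matrix (Fin n) (Fin n) ℂ) (i : Fin n)
    {x : EuclideanSpace ℂ (Fin n)}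
    (hx : x ∈ Submodule.span ℂ (Set.range fun k =>
      (Matrix.isHermitian_conjTranspose_mul_self A).eigenvectorBasis (lowIdx A i k))) :
    Real.sqrt (svα A i) * ‖x‖ ≤ ‖Matrix.toEuclideanCLM (𝕜 := ℂ) A x‖ := by
  set hA := Matrix.isHermitian_conjTranspose_mul_self A
  set b := hA.eigenvectorBasis
  set T := Matrix.toEuclideanCLM (𝕜 := ℂ) A
  have key : svα A i * ‖x‖ ^ 2 ≤ ‖T x‖ ^ 2 := by
    rw [normT_sq, norm_sq_repr b x, Finset.mul_sum]
    apply Finset.sum_le_sum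
    intro j _
    by_cases hj : ∃ k, lowIdx A i k = j
    · obtain ⟨k, rfl⟩ := hj
      have h1 : svα A i ≤ hA.eigenvalues (lowIdx A i k) := by
        have : lowIdx A i k = sve A (Fin.castLE i.isLt k) := rfl
        rw [this]
        exact svα_antitone A (by
          rw [Fin.le_def]
          simpa using Nat.lt_succ_iff.mp k.isLt)
      exact mul_le_mul_of_nonneg_right h1 (sq_nonneg _)
    · push_neg at hj
      rw [repr_eq_zero_of_mem_span b _ hx hj]
      simp
  calc Real.sqrt (svα A i) * ‖x‖
      = Real.sqrt (svα A i * ‖x‖ ^ 2) := by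
        rw [Real.sqrt_mul (svα_nonneg A i), Real.sqrt_sq (norm_nonneg _)]
    _ ≤ Real.sqrt (‖T x‖ ^ 2) := Real.sqrt_le_sqrt key
    _ = ‖T x‖ := Real.sqrt_sq (norm_nonneg _)

lemma upper_bound (A : Matrix (Fin n) (Fin n) ℂ) (i : Fin n)
    {x : EuclideanSpace ℂ (Fin n)}
    (hx : x ∈ Submodule.span ℂ (Set.range fun k =>
      (Matrix.isHermitian_conjTranspose_mul_self A).eigenvectorBasis (highIdx A i k))) :
    ‖Matrix.toEuclideanCLM (𝕜 := ℂ) A x‖ ≤ Real.sqrt (svα A i) * ‖x‖ := by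
  set hA := Matrix.isHermitian_conjTranspose_mul_self A
  set b := hA.eigenvectorBasis
  set T := Matrix.toEuclideanCLM (𝕜 := ℂ) A
  have key : ‖T x‖ ^ 2 ≤ svα A i * ‖x‖ ^ 2 := by
    rw [normT_sq, norm_sq_repr b x, Finset.mul_sum]
    apply Finset.sum_le_sum
    intro j _
    by_cases hj : ∃ k, highIdx A i k = j
    · obtain ⟨k, rfl⟩ := hj
      have h1 : hA.eigenvalues (highIdx A i k) ≤ svα A i := by
        have : highIdx A i k = sve A ⟨i.val + k.val, by omega⟩ := rfl
        rw [this]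
        exact svα_antitone A (by rw [Fin.le_def]; simp)
      exact mul_le_mul_of_nonneg_right h1 (sq_nonneg _)
    · push_neg at hj
      rw [repr_eq_zero_of_mem_span b _ hx hj]
      simp
  calc ‖T x‖ = Real.sqrt (‖T x‖ ^ 2) := (Real.sqrt_sq (norm_nonneg _)).symm
    _ ≤ Real.sqrt (svα A i * ‖x‖ ^ 2) := Real.sqrt_le_sqrt key
    _ = Real.sqrt (svα A i) * ‖x‖ := by
        rw [Real.sqrt_mul (svα_nonneg A i), Real.sqrt_sq (norm_nonneg _)]

lemma singVals_key (A B : Matrix (Fin n) (Fin n) ℂ) (i : Fin n) :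
    Real.sqrt (svα A i) ≤ Real.sqrt (svα B i) + matOpNorm (A - B) := by
  classical
  set bA := (Matrix.isHermitian_conjTranspose_mul_self A).eigenvectorBasis
  set bB := (Matrix.isHermitian_conjTranspose_mul_self B).eigenvectorBasis
  set V : Submodule ℂ (EuclideanSpace ℂ (Fin n)) :=
    Submodule.span ℂ (Set.range fun k => bA (lowIdx A i k))
  set W : Submodule ℂ (EuclideanSpace ℂ (Fin n)) :=
    Submodule.span ℂ (Set.range fun k => bB (highIdx B i k))
  have hV : Module.finrank ℂ V = i.val + 1 := by
    have li : LinearIndependent ℂ (fun k => bA (lowIdx A i k)) :=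
      (bA.orthonormal.comp _ (lowIdx_injective A i)).linearIndependent
    rw [finrank_span_eq_card li]
    simp
  have hW : Module.finrank ℂ W = n - i.val := by
    have li : LinearIndependent ℂ (fun k => bB (highIdx B i k)) :=
      (bB.orthonormal.comp _ (highIdx_injective B i)).linearIndependent
    rw [finrank_span_eq_card li]
    simp
  have hsum := Submodule.finrank_sup_add_finrank_inf_eq V W
  have hle : Module.finrank ℂ ↥(V ⊔ W) ≤ n := by
    have := Submodule.finrank_le (V ⊔ W)
    rwa [finrank_euclideanSpace, Fintype.card_fin] at this
  have hpos : 0 < Module.finrank ℂ ↥(V ⊓ W) := by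
    have hi := i.isLt
    omega
  have : Nontrivial ↥(V ⊓ W) := Module.finrank_pos_iff.mp hpos
  obtain ⟨⟨x, hxmem⟩, hx0⟩ := exists_ne (0 : ↥(V ⊓ W))
  have hxne : x ≠ 0 := by
    simpa [Submodule.mk_eq_zero] using hx0
  have hxV : x ∈ V := hxmem.1
  have hxW : x ∈ W := hxmem.2
  set TA := Matrix.toEuclideanCLM (𝕜 := ℂ) A
  set TB := Matrix.toEuclideanCLM (𝕜 := ℂ) B
  have h1 : Real.sqrt (svα A i) * ‖x‖ ≤ ‖TA x‖ := lower_bound A i hxV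
  have h2 : ‖TB x‖ ≤ Real.sqrt (svα B i) * ‖x‖ := upper_bound B i hxW
  have hAB : Matrix.toEuclideanCLM (𝕜 := ℂ) (A - B) = TA - TB := map_sub _ _ _
  have h3 : ‖TA x‖ ≤ ‖TB x‖ + ‖(TA - TB) x‖ := by
    have : TA x = TB x + (TA - TB) x := by
      simp [ContinuousLinearMap.sub_apply]
    rw [this]
    exact norm_add_le _ _
  have h4 : ‖(TA - TB) x‖ ≤ matOpNorm (A - B) * ‖x‖ := by
    rw [matOpNorm, hAB]
    exact ContinuousLinearMap.le_opNorm _ _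
  have hxpos : (0:ℝ) < ‖x‖ := norm_pos_iff.mpr hxne
  have chain : Real.sqrt (svα A i) * ‖x‖ ≤
      (Real.sqrt (svα B i) + matOpNorm (A - B)) * ‖x‖ := by
    calc Real.sqrt (svα A i) * ‖x‖ ≤ ‖TA x‖ := h1
      _ ≤ ‖TB x‖ + ‖(TA - TB) x‖ := h3
      _ ≤ Real.sqrt (svα B i) * ‖x‖ + matOpNorm (A - B) * ‖x‖ := add_le_add h2 h4
      _ = (Real.sqrt (svα B i) + matOpNorm (A - B)) * ‖x‖ := by ring
  exact le_of_mul_le_mul_right chain hxpos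

theorem singular_value_weyl_aux {n : ℕ}
    (A B : Matrix (Fin n) (Fin n) ℂ) (i : Fin n) :
    |Real.sqrt (svα A i) - Real.sqrt (svα B i)| ≤ matOpNorm (A - B) := by
  have hBA : matOpNorm (B - A) = matOpNorm (A - B) := by
    rw [matOpNorm, matOpNorm, show B - A = -(A - B) by abel, map_neg, norm_neg]
  rw [abs_sub_le_iff]
  constructor
  · have := singVals_key A B i
    linarith
  · have := singVals_key B A i
    rw [hBA] at this
    linarith


lemma singVals_eq_sqrt_svα {n : ℕ} (A : Matrix (Fin n) (Fin n) ℂ) (i : Fin n) :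
    singVals A i = Real.sqrt (svα A i) := rfl

end Aux

/-- Weyl-type inequality for singular values. -/
theorem singular_value_weyl {n : ℕ} (hn : 0 < n)
    (A B : Matrix (Fin n) (Fin n) ℂ) (i : Fin n) :
    |singVals A i - singVals B i| ≤ matOpNorm (A - B) := by
  rw [singVals_eq_sqrt_svα, singVals_eq_sqrt_svα]
  exact singular_value_weyl_aux A B i
end

section
/- Surjectivity of the Wigderson-Wigderson functional F_{p,q} onto ℝ_{>0}: let p, q be reals with 1 < p < q < ∞ and 1/p + 1/q < 1. Then for every real c > 0 there exists a nonzero Schwartz function f ∈ 𝓢(ℝ) such that ‖f‖_q * ‖𝓕f‖_q = c * ‖f‖_p * ‖𝓕f‖_p. -/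
open MeasureTheory SchwartzMap

/-- The `L^r` norm of `f : ℝ → ℂ` with respect to Lebesgue measure. -/
noncomputable def Lnorm (r : ℝ) (f : ℝ → ℂ) : ℝ :=
  (∫ x : ℝ, ‖f x‖ ^ r) ^ (1 / r)

/-- The sup norm `‖f‖_∞ = sup_x |f x|`. -/
noncomputable def Lsup (f : ℝ → ℂ) : ℝ := ⨆ x : ℝ, ‖f x‖

/-- The Fourier transform `𝓕 f (ξ) = ∫ f x · e^{-2πi x ξ} dx`. -/
noncomputable def FT (f : ℝ → ℂ) : ℝ → ℂ := fun ξ =>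
  ∫ x : ℝ, f x * Complex.exp (-2 * Real.pi * Complex.I * x * ξ)

section
open Polynomial

noncomputable def gf (b : ℂ) : ℝ → ℂ := fun x : ℝ => Complex.exp (-(Real.pi:ℂ) * b * (x:ℂ)^2)

lemma gf_contDiff (b : ℂ) : ContDiff ℝ ⊤ (gf b) := by
  have h : ContDiff ℝ ⊤ (fun x : ℝ => -(Real.pi:ℂ) * b * (x:ℂ)^2) := by
    exact (contDiff_const.mul ((Complex.ofRealCLM.contDiff).pow 2))
  exact h.cexp

lemma gf_deriv (b : ℂ) (P : Polynomial ℂ) (x : ℝ) :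
    HasDerivAt (fun y : ℝ => P.eval (y:ℂ) * gf b y)
      ((P.derivative + P * (Polynomial.C (-2*(Real.pi:ℂ)*b) * Polynomial.X)).eval (x:ℂ) * gf b x) x := by
  have h1 : HasDerivAt (fun z : ℂ => P.eval z * Complex.exp (-(Real.pi:ℂ) * b * z^2))
      (P.derivative.eval (x:ℂ) * Complex.exp (-(Real.pi:ℂ) * b * (x:ℂ)^2)
        + P.eval (x:ℂ) * (Complex.exp (-(Real.pi:ℂ) * b * (x:ℂ)^2) * (-(Real.pi:ℂ) * b * (2 * (x:ℂ)^1)))) (x:ℂ) := by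
    exact (P.hasDerivAt (x:ℂ)).mul (((hasDerivAt_pow 2 (x:ℂ)).const_mul (-(Real.pi:ℂ) * b)).cexp)
  have h2 := h1.comp_ofReal
  convert h2 using 1
  · rfl
  simp [gf, Polynomial.eval_add, Polynomial.eval_mul]
  ring

lemma gf_iteratedDeriv (b : ℂ) (n : ℕ) :
    ∃ P : Polynomial ℂ, iteratedDeriv n (gf b) = fun x : ℝ => P.eval (x:ℂ) * gf b x := by
  induction n with
  | zero => exact ⟨1, by simp [iteratedDeriv_zero]⟩
  | succ n ih =>
    obtain ⟨P, hP⟩ := ih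
    refine ⟨P.derivative + P * (Polynomial.C (-2*(Real.pi:ℂ)*b) * Polynomial.X), ?_⟩
    rw [iteratedDeriv_succ, hP]
    funext x
    exact (gf_deriv b P x).deriv


-- |x|^m * exp(-(a x^2)) is bounded

lemma pow_mul_exp_bound {a : ℝ} (ha : 0 < a) (m : ℕ) :
    ∃ C : ℝ, ∀ x : ℝ, |x| ^ m * Real.exp (-(a * x^2)) ≤ C := by
  refine ⟨max 1 (m.factorial / a ^ m), fun x => ?_⟩
  rcases le_or_gt (|x|) 1 with h | h
  · calc |x| ^ m * Real.exp (-(a * x^2)) ≤ 1 * 1 := by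
          exact mul_le_mul (pow_le_one₀ (abs_nonneg x) h)
            (Real.exp_le_one_iff.mpr (by nlinarith [sq_nonneg x])) (Real.exp_nonneg _) one_pos.le
        _ ≤ _ := by simpa using le_max_left _ _
  · have hx2 : (1:ℝ) ≤ x ^ 2 := by nlinarith [sq_abs x]
    have hkey : (a * x^2) ^ m / m.factorial ≤ Real.exp (a * x^2) :=
      Real.pow_div_factorial_le_exp _ (by positivity) m
    have hexp : Real.exp (-(a * x^2)) = (Real.exp (a * x^2))⁻¹ := by
      rw [Real.exp_neg]
    have hxm : |x| ^ m ≤ (x^2) ^ m := by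
      apply pow_le_pow_left₀ (abs_nonneg x)
      nlinarith [sq_abs x, abs_nonneg x]
    have hpos : (0:ℝ) < (a * x^2) ^ m / m.factorial := by positivity
    calc |x| ^ m * Real.exp (-(a * x^2)) ≤ (x^2)^m * ((a * x^2) ^ m / m.factorial)⁻¹ := by
          rw [hexp]
          exact mul_le_mul hxm (inv_anti₀ hpos hkey) (by positivity) (by positivity)
      _ = m.factorial / a ^ m := by
          rw [mul_pow]
          field_simp
      _ ≤ _ := le_max_right _ _

lemma gf_abs (b : ℂ) (x : ℝ) : ‖gf b x‖ = Real.exp (-(Real.pi * b.re * x^2)) := by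
  rw [gf, Complex.norm_exp]
  congr 1
  have : -(Real.pi:ℂ) * b * (x:ℂ)^2 = ((-(Real.pi * x^2) : ℝ) : ℂ) * b := by push_cast; ring
  rw [this, Complex.re_ofReal_mul]
  ring

lemma gf_norm (b : ℂ) (x : ℝ) : ‖gf b x‖ = Real.exp (-(Real.pi * b.re * x^2)) := gf_abs b x

noncomputable def gaussMap (b : ℂ) (hb : 0 < b.re) : SchwartzMap ℝ ℂ where
  toFun := gf b
  smooth' := by exact (gf_contDiff b).of_le le_top
  decay' := by
    intro k n
    obtain ⟨P, hP⟩ := gf_iteratedDeriv b n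
    have hu : 0 < Real.pi * b.re := by positivity
    choose B hB using fun m : ℕ => pow_mul_exp_bound hu m
    refine ⟨∑ i ∈ Finset.range (P.natDegree + 1), ‖P.coeff i‖ * B (k + i), fun x => ?_⟩
    rw [norm_iteratedFDeriv_eq_norm_iteratedDeriv, hP]
    have hE : ‖gf b x‖ = Real.exp (-(Real.pi * b.re * x^2)) := gf_norm b x
    have hPle : ‖P.eval (x:ℂ)‖ ≤ ∑ i ∈ Finset.range (P.natDegree + 1), ‖P.coeff i‖ * |x| ^ i := by
      rw [Polynomial.eval_eq_sum_range]
      refine (norm_sum_le _ _).trans (Finset.sum_le_sum fun i _ => ?_)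
      rw [norm_mul, norm_pow, Complex.norm_real, Real.norm_eq_abs]
    calc ‖x‖ ^ k * ‖P.eval (x:ℂ) * gf b x‖
        = ‖P.eval (x:ℂ)‖ * (|x| ^ k * Real.exp (-(Real.pi * b.re * x^2))) := by
          rw [norm_mul, hE, Real.norm_eq_abs]; ring
      _ ≤ (∑ i ∈ Finset.range (P.natDegree + 1), ‖P.coeff i‖ * |x| ^ i)
            * (|x| ^ k * Real.exp (-(Real.pi * b.re * x^2))) := by
          apply mul_le_mul_of_nonneg_right hPle (by positivity)
      _ = ∑ i ∈ Finset.range (P.natDegree + 1),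
            ‖P.coeff i‖ * (|x| ^ (k + i) * Real.exp (-(Real.pi * b.re * x^2))) := by
          rw [Finset.sum_mul]
          exact Finset.sum_congr rfl fun i _ => by rw [pow_add]; ring
      _ ≤ _ := by
          apply Finset.sum_le_sum fun i _ => ?_
          apply mul_le_mul_of_nonneg_left _ (norm_nonneg (P.coeff i))
          exact hB (k+i) x

lemma gaussMap_apply (b : ℂ) (hb : 0 < b.re) (x : ℝ) : gaussMap b hb x = gf b x := rfl

lemma gaussMap_coe (b : ℂ) (hb : 0 < b.re) : ⇑(gaussMap b hb) = gf b := rfl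

lemma FT_eq (f : ℝ → ℂ) : FT f = FourierTransform.fourier f := by
  funext w
  rw [Real.fourier_real_eq_integral_exp_smul]
  unfold FT
  congr 1
  funext v
  rw [smul_eq_mul, mul_comm]
  congr 1
  push_cast
  ring

lemma FT_gf {b : ℂ} (hb : 0 < b.re) :
    FT (gf b) = fun ξ : ℝ => (1 / b ^ (1/2 : ℂ)) * gf (1/b) ξ := by
  rw [FT_eq]
  have := fourier_gaussian_pi hb
  rw [show (fun x : ℝ => Complex.exp (-(Real.pi:ℂ) * b * (x:ℂ)^2)) = gf b from rfl] at this
  rw [this]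
  funext ξ
  congr 1
  unfold gf
  congr 1
  ring

-- the basic gaussian integral, rpow form

lemma I_val {t : ℝ} (ht : 0 < t) :
    (∫ x : ℝ, Real.exp (-(Real.pi * t) * x^2)) = t ^ (-(1/2) : ℝ) := by
  rw [integral_gaussian]
  rw [show Real.pi / (Real.pi * t) = 1/t by field_simp]
  rw [show (1/t) = t⁻¹ by ring, Real.sqrt_inv, Real.sqrt_eq_rpow,
    ← Real.rpow_neg_one]
  rw [← Real.rpow_mul ht.le]
  norm_num

lemma exp_rpow (y r : ℝ) : (Real.exp y) ^ r = Real.exp (y * r) := (Real.exp_mul y r).symm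

noncomputable def S (μ ν : ℝ) : ℝ → ℝ :=
  fun x => Real.exp (-(Real.pi * 1) * x^2) + μ * Real.exp (-(Real.pi * ν) * x^2)

noncomputable def J (r μ ν : ℝ) : ℝ := ∫ x : ℝ, (S μ ν x) ^ r

lemma S_pos {μ ν : ℝ} (hμ : 0 ≤ μ) (x : ℝ) : 0 < S μ ν x := by
  unfold S; positivity

lemma S_cont (μ ν : ℝ) : Continuous (S μ ν) := by
  unfold S
  fun_prop

lemma S_rpow_cont {μ ν r : ℝ} (hr : 0 ≤ r) : Continuous (fun x => S μ ν x ^ r) :=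
  (S_cont μ ν).rpow_const (fun x => Or.inr hr)

lemma gauss_rpow (t r : ℝ) (x : ℝ) :
    (Real.exp (-(Real.pi * t) * x^2)) ^ r = Real.exp (-(Real.pi * (t*r)) * x^2) := by
  rw [exp_rpow]; congr 1; ring

lemma integrable_gauss_rpow {t r : ℝ} (ht : 0 < t) (hr : 0 < r) :
    Integrable (fun x : ℝ => (Real.exp (-(Real.pi * t) * x^2)) ^ r) := by
  simp_rw [gauss_rpow]
  have : 0 < Real.pi * (t * r) := by positivity
  simpa using integrable_exp_neg_mul_sq this

lemma S_le {μ ν : ℝ} (hμ : 0 ≤ μ) (hν : 0 < ν) (x : ℝ) :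
    S μ ν x ≤ (1 + μ) * Real.exp (-(Real.pi * min 1 ν) * x^2) := by
  have h1 : Real.exp (-(Real.pi * 1) * x^2) ≤ Real.exp (-(Real.pi * min 1 ν) * x^2) := by
    apply Real.exp_le_exp.mpr
    have := mul_le_mul_of_nonneg_right
      (mul_le_mul_of_nonneg_left (min_le_left (1:ℝ) ν) Real.pi_pos.le) (sq_nonneg x)
    linarith
  have h2 : Real.exp (-(Real.pi * ν) * x^2) ≤ Real.exp (-(Real.pi * min 1 ν) * x^2) := by
    apply Real.exp_le_exp.mpr
    have := mul_le_mul_of_nonneg_right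
      (mul_le_mul_of_nonneg_left (min_le_right (1:ℝ) ν) Real.pi_pos.le) (sq_nonneg x)
    linarith
  unfold S
  nlinarith [Real.exp_pos (-(Real.pi * min 1 ν) * x^2), mul_le_mul_of_nonneg_left h2 hμ]

lemma integrable_S_rpow {μ ν r : ℝ} (hμ : 0 ≤ μ) (hν : 0 < ν) (hr : 0 < r) :
    Integrable (fun x : ℝ => S μ ν x ^ r) := by
  have hm : 0 < min 1 ν := lt_min one_pos hν
  apply Integrable.mono' (((integrable_gauss_rpow hm hr).const_mul ((1+μ)^r)))
    (S_rpow_cont hr.le).aestronglyMeasurable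
  filter_upwards with x
  rw [Real.norm_eq_abs, abs_of_nonneg (Real.rpow_nonneg (S_pos hμ x).le r)]
  calc S μ ν x ^ r ≤ ((1 + μ) * Real.exp (-(Real.pi * min 1 ν) * x^2)) ^ r :=
        Real.rpow_le_rpow (S_pos hμ x).le (S_le hμ hν x) hr.le
    _ = (1+μ)^r * (Real.exp (-(Real.pi * min 1 ν) * x^2)) ^ r :=
        Real.mul_rpow (by positivity) (Real.exp_nonneg _)

lemma J_ge_one {μ ν r : ℝ} (hμ : 0 ≤ μ) (hν : 0 < ν) (hr : 0 < r) :
    r ^ (-(1/2) : ℝ) ≤ J r μ ν := by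
  have h1 : Integrable (fun x : ℝ => (Real.exp (-(Real.pi * 1) * x^2)) ^ r) :=
    integrable_gauss_rpow one_pos hr
  have hle : (∫ x : ℝ, (Real.exp (-(Real.pi * 1) * x^2)) ^ r) ≤ J r μ ν := by
    apply integral_mono h1 (integrable_S_rpow hμ hν hr)
    intro x
    apply Real.rpow_le_rpow (Real.exp_nonneg _) _ hr.le
    unfold S
    nlinarith [Real.exp_pos (-(Real.pi * ν) * x^2), mul_nonneg hμ (Real.exp_nonneg (-(Real.pi * ν) * x^2))]
  calc r ^ (-(1/2):ℝ) = ∫ x : ℝ, (Real.exp (-(Real.pi * 1) * x^2)) ^ r := by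
        simp_rw [gauss_rpow, one_mul]; rw [I_val hr]
    _ ≤ J r μ ν := hle

lemma J_ge_two {μ ν r : ℝ} (hμ : 0 ≤ μ) (hν : 0 < ν) (hr : 0 < r) :
    μ ^ r * (ν * r) ^ (-(1/2) : ℝ) ≤ J r μ ν := by
  have h2 : Integrable (fun x : ℝ => μ ^ r * (Real.exp (-(Real.pi * ν) * x^2)) ^ r) :=
    (integrable_gauss_rpow hν hr).const_mul _
  have hle : (∫ x : ℝ, μ ^ r * (Real.exp (-(Real.pi * ν) * x^2)) ^ r) ≤ J r μ ν := by
    apply integral_mono h2 (integrable_S_rpow hμ hν hr)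
    intro x
    show μ ^ r * Real.exp (-(Real.pi * ν) * x ^ 2) ^ r ≤ S μ ν x ^ r
    rw [← Real.mul_rpow hμ (Real.exp_nonneg _)]
    apply Real.rpow_le_rpow (by positivity) _ hr.le
    unfold S
    nlinarith [Real.exp_pos (-(Real.pi * 1) * x^2)]
  calc μ ^ r * (ν * r) ^ (-(1/2):ℝ)
      = ∫ x : ℝ, μ ^ r * (Real.exp (-(Real.pi * ν) * x^2)) ^ r := by
        simp_rw [gauss_rpow]
        rw [integral_const_mul, I_val (by positivity)]
    _ ≤ J r μ ν := hle

lemma add_rpow_le {a b r : ℝ} (ha : 0 ≤ a) (hb : 0 ≤ b) (hr : 0 ≤ r) :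
    (a + b) ^ r ≤ (2:ℝ) ^ r * (a ^ r + b ^ r) := by
  rcases le_total a b with h | h
  · calc (a+b)^r ≤ (2*b)^r := Real.rpow_le_rpow (by linarith) (by linarith) hr
      _ = 2^r * b^r := Real.mul_rpow (by norm_num) hb
      _ ≤ 2^r * (a^r + b^r) := by
          have h2r : (0:ℝ) ≤ (2:ℝ)^r := Real.rpow_nonneg (by norm_num) r
          nlinarith [Real.rpow_nonneg ha r]
  · calc (a+b)^r ≤ (2*a)^r := Real.rpow_le_rpow (by linarith) (by linarith) hr
      _ = 2^r * a^r := Real.mul_rpow (by norm_num) ha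
      _ ≤ 2^r * (a^r + b^r) := by
          have h2r : (0:ℝ) ≤ (2:ℝ)^r := Real.rpow_nonneg (by norm_num) r
          nlinarith [Real.rpow_nonneg hb r]

lemma J_le {μ ν r : ℝ} (hμ : 0 ≤ μ) (hν : 0 < ν) (hr : 0 < r) :
    J r μ ν ≤ (2:ℝ) ^ r * (r ^ (-(1/2) : ℝ) + μ ^ r * (ν * r) ^ (-(1/2) : ℝ)) := by
  have h1 : Integrable (fun x : ℝ => (Real.exp (-(Real.pi * 1) * x^2)) ^ r) :=
    integrable_gauss_rpow one_pos hr
  have h2 : Integrable (fun x : ℝ => μ ^ r * (Real.exp (-(Real.pi * ν) * x^2)) ^ r) :=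
    (integrable_gauss_rpow hν hr).const_mul _
  have hint : Integrable (fun x : ℝ => (2:ℝ)^r * ((Real.exp (-(Real.pi * 1) * x^2)) ^ r
      + μ ^ r * (Real.exp (-(Real.pi * ν) * x^2)) ^ r)) := ((h1.add h2).const_mul _)
  have hle : J r μ ν ≤ ∫ x : ℝ, (2:ℝ)^r * ((Real.exp (-(Real.pi * 1) * x^2)) ^ r
      + μ ^ r * (Real.exp (-(Real.pi * ν) * x^2)) ^ r) := by
    apply integral_mono (integrable_S_rpow hμ hν hr) hint
    intro x
    unfold S
    calc (Real.exp (-(Real.pi * 1) * x^2) + μ * Real.exp (-(Real.pi * ν) * x^2)) ^ r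
        ≤ (2:ℝ)^r * ((Real.exp (-(Real.pi * 1) * x^2))^r + (μ * Real.exp (-(Real.pi * ν) * x^2))^r) :=
          add_rpow_le (Real.exp_nonneg _) (by positivity) hr.le
      _ = (2:ℝ)^r * ((Real.exp (-(Real.pi * 1) * x^2))^r + μ^r * (Real.exp (-(Real.pi * ν) * x^2))^r) := by
          rw [Real.mul_rpow hμ (Real.exp_nonneg _)]
  calc J r μ ν ≤ _ := hle
    _ = (2:ℝ) ^ r * (r ^ (-(1/2) : ℝ) + μ ^ r * (ν * r) ^ (-(1/2) : ℝ)) := by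
        rw [integral_const_mul, integral_add h1 h2, integral_const_mul]
        simp_rw [gauss_rpow, one_mul]
        rw [I_val hr, I_val (by positivity)]

lemma J_contAt {r : ℝ} (hr : 0 < r) {μ ν : ℝ → ℝ} {a₀ : ℝ}
    (hμ : ContinuousAt μ a₀) (hν : ContinuousAt ν a₀) (hμ0 : 0 < μ a₀) (hν0 : 0 < ν a₀) :
    ContinuousAt (fun a => J r (μ a) (ν a)) a₀ := by
  unfold J
  set M : ℝ := μ a₀ + 1 with hM
  set m : ℝ := min 1 (ν a₀ / 2) with hm
  have hm0 : 0 < m := lt_min one_pos (by linarith)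
  have hev1 : ∀ᶠ a in nhds a₀, μ a ∈ Set.Ioo 0 M := by
    apply hμ.eventually_mem (isOpen_Ioo.mem_nhds _)
    constructor
    · exact hμ0
    · simp [hM]
  have hev2 : ∀ᶠ a in nhds a₀, ν a ∈ Set.Ioi (ν a₀ / 2) := by
    apply hν.eventually_mem (isOpen_Ioi.mem_nhds _)
    simp only [Set.mem_Ioi]
    linarith
  have hev : ∀ᶠ a in nhds a₀, μ a ∈ Set.Ioo 0 M ∧ ν a ∈ Set.Ioi (ν a₀ / 2) := by
    filter_upwards [hev1, hev2] with a h1 h2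
    exact ⟨h1, h2⟩
  apply continuousAt_of_dominated (bound := fun x => ((1 + M) * Real.exp (-(Real.pi * m) * x^2))^r)
  · filter_upwards with a
    exact (S_rpow_cont hr.le).aestronglyMeasurable
  · filter_upwards [hev] with a ⟨h1, h2⟩
    filter_upwards with x
    rw [Real.norm_eq_abs, abs_of_nonneg (Real.rpow_nonneg (S_pos h1.1.le x).le r)]
    apply Real.rpow_le_rpow (S_pos h1.1.le x).le _ hr.le
    have e1 : Real.exp (-(Real.pi * 1) * x^2) ≤ Real.exp (-(Real.pi * m) * x^2) := by
      apply Real.exp_le_exp.mpr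
      have := mul_le_mul_of_nonneg_right
        (mul_le_mul_of_nonneg_left (min_le_left (1:ℝ) (ν a₀/2)) Real.pi_pos.le) (sq_nonneg x)
      rw [← hm] at this
      linarith
    have e2 : Real.exp (-(Real.pi * ν a) * x^2) ≤ Real.exp (-(Real.pi * m) * x^2) := by
      apply Real.exp_le_exp.mpr
      have hma : m ≤ ν a := le_trans (min_le_right _ _) (le_of_lt h2)
      have := mul_le_mul_of_nonneg_right
        (mul_le_mul_of_nonneg_left hma Real.pi_pos.le) (sq_nonneg x)
      linarith
    have hμa : μ a ≤ M := h1.2.le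
    unfold S
    nlinarith [Real.exp_pos (-(Real.pi * m) * x^2), Real.exp_pos (-(Real.pi * ν a) * x^2),
      mul_le_mul_of_nonneg_left e2 h1.1.le,
      mul_le_mul_of_nonneg_right hμa (Real.exp_pos (-(Real.pi * m) * x^2)).le]
  · have : Integrable (fun x : ℝ => (1+M)^r * (Real.exp (-(Real.pi * m) * x^2))^r) :=
      (integrable_gauss_rpow hm0 hr).const_mul _
    apply this.congr
    filter_upwards with x
    rw [Real.mul_rpow (by positivity) (Real.exp_nonneg _)]
  · filter_upwards with x
    apply ContinuousAt.rpow_const _ (Or.inr hr.le)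
    apply ContinuousAt.add continuousAt_const
    apply ContinuousAt.mul hμ
    apply Real.continuous_exp.continuousAt.comp
    exact (((hν.const_mul Real.pi).neg).mul continuousAt_const)

lemma Lnorm_gf {b : ℂ} {r : ℝ} (hb : 0 < b.re) (hr : 0 < r) :
    Lnorm r (gf b) = (b.re * r) ^ (-(1/(2*r)) : ℝ) := by
  unfold Lnorm
  have h : ∀ x : ℝ, ‖gf b x‖ ^ r = Real.exp (-(Real.pi * (b.re * r)) * x^2) := by
    intro x
    rw [gf_abs, exp_rpow]
    congr 1
    ring
  simp_rw [h]
  rw [I_val (by positivity), ← Real.rpow_mul (by positivity)]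
  congr 1
  field_simp

lemma Lnorm_const_mul (k : ℂ) (f : ℝ → ℂ) {r : ℝ} (hr : 0 < r) :
    Lnorm r (fun x => k * f x) = ‖k‖ * Lnorm r f := by
  unfold Lnorm
  have h : ∀ x : ℝ, ‖k * f x‖ ^ r = ‖k‖ ^ r * ‖f x‖ ^ r := by
    intro x
    rw [norm_mul, Real.mul_rpow (by positivity) (by positivity)]
  simp_rw [h]
  rw [integral_const_mul, Real.mul_rpow (by positivity)
    (integral_nonneg fun x => Real.rpow_nonneg (by positivity) r),
    ← Real.rpow_mul (by positivity), mul_one_div, div_self hr.ne', Real.rpow_one]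

lemma Lnorm_FT_gf {b : ℂ} {r : ℝ} (hb : 0 < b.re) (hr : 0 < r) :
    Lnorm r (FT (gf b)) =
      ‖b‖ ^ (-(1/2) : ℝ) * ((1/b).re * r) ^ (-(1/(2*r)) : ℝ) := by
  have hb0 : b ≠ 0 := fun h => by simp [h] at hb
  have hinv : 0 < (1/b).re := by
    rw [one_div, Complex.inv_re]
    exact div_pos hb (Complex.normSq_pos.mpr hb0)
  rw [FT_gf hb, Lnorm_const_mul _ _ hr, Lnorm_gf hinv hr]
  congr 1
  rw [norm_div, norm_one]
  rw [Complex.norm_cpow_of_ne_zero hb0]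
  rw [show ((1/2:ℂ)).re = (1/2 : ℝ) by norm_num, show ((1/2:ℂ)).im = 0 by norm_num]
  rw [mul_zero, Real.exp_zero, div_one, Real.rpow_neg (norm_nonneg b), one_div]

lemma rpow_eq_exp {x : ℝ} (hx : 0 < x) (y : ℝ) : x ^ y = Real.exp (y * Real.log x) := by
  rw [Real.rpow_def_of_pos hx, mul_comm]

theorem chirp_case (p q c : ℝ) (hp : 1 < p) (hpq : p < q) (hc : 0 < c)
    (hcK : c ≤ p ^ (1/p:ℝ) * q ^ (-(1/q):ℝ)) :
    ∃ f : SchwartzMap ℝ ℂ, f ≠ 0 ∧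
      Lnorm q ⇑f * Lnorm q (FT ⇑f) = c * (Lnorm p ⇑f * Lnorm p (FT ⇑f)) := by
  have hp0 : (0:ℝ) < p := by linarith
  have hq0 : (0:ℝ) < q := by linarith
  set K := p ^ (1/p:ℝ) * q ^ (-(1/q):ℝ) with hKdef
  have hK0 : 0 < K := by positivity
  set e := 1/p - 1/q with hedef
  have he : 0 < e := by
    have : 1/q < 1/p := by
      apply one_div_lt_one_div_of_lt hp0 hpq
    rw [hedef]; linarith
  set N := (K/c) ^ (2/e : ℝ) with hNdef
  have hKc1 : 1 ≤ K / c := (one_le_div hc).mpr hcK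
  have hN1 : 1 ≤ N := by
    rw [hNdef]
    calc (1:ℝ) = (K/c)^(0:ℝ) := (Real.rpow_zero _).symm
      _ ≤ _ := Real.rpow_le_rpow_of_exponent_le hKc1 (by positivity)
  have hN0 : 0 < N := lt_of_lt_of_le one_pos hN1
  have hNe : N ^ (e/2 : ℝ) = K / c := by
    rw [hNdef, ← Real.rpow_mul (by positivity), show (2/e) * (e/2) = 1 by field_simp,
      Real.rpow_one]
  set v := Real.sqrt (N - 1) with hvdef
  set b : ℂ := 1 + (v:ℂ) * Complex.I with hbdef
  have hbre : b.re = 1 := by simp [hbdef]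
  have hnormSq : Complex.normSq b = N := by
    rw [hbdef, show (1:ℂ) + (v:ℂ)*Complex.I = ((1:ℝ):ℂ) + (v:ℂ)*Complex.I by norm_num,
      Complex.normSq_add_mul_I, hvdef, Real.sq_sqrt (by linarith)]
    ring
  have hb0 : 0 < b.re := by rw [hbre]; norm_num
  have habs : ‖b‖ = N ^ ((1/2):ℝ) := by
    rw [Complex.norm_def, hnormSq, Real.sqrt_eq_rpow]
  have hinvre : (1/b).re = 1/N := by
    rw [one_div, Complex.inv_re, hnormSq, hbre]
  refine ⟨gaussMap b hb0, ?_, ?_⟩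
  · intro h
    have h2 := congrArg (fun f : SchwartzMap ℝ ℂ => f 0) h
    simp only [gaussMap_coe b hb0] at h2
    simp [gf] at h2
  · rw [gaussMap_coe]
    rw [Lnorm_gf hb0 hq0, Lnorm_gf hb0 hp0, Lnorm_FT_gf hb0 hq0, Lnorm_FT_gf hb0 hp0]
    rw [hbre, habs, hinvre]
    rw [show ((N:ℝ)^((1/2):ℝ)) ^ (-(1/2):ℝ) = N ^ (-(1/4):ℝ) by
      rw [← Real.rpow_mul hN0.le]; norm_num]
    rw [one_mul, one_mul]
    have hlogN : (e/2) * Real.log N = (1/p) * Real.log p + (-(1/q)) * Real.log q - Real.log c := by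
      have h1 : Real.log (N ^ (e/2:ℝ)) = Real.log (K/c) := by rw [hNe]
      rw [Real.log_rpow hN0, Real.log_div hK0.ne' hc.ne', hKdef,
        Real.log_mul (by positivity) (by positivity), Real.log_rpow hp0, Real.log_rpow hq0] at h1
      linarith
    have hq1N : (0:ℝ) < 1/N*q := by positivity
    have hp1N : (0:ℝ) < 1/N*p := by positivity
    have hlq : Real.log (1/N*q) = Real.log q - Real.log N := by
      rw [Real.log_mul (by positivity) hq0.ne', one_div, Real.log_inv]; ring
    have hlp : Real.log (1/N*p) = Real.log p - Real.log N := by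
      rw [Real.log_mul (by positivity) hp0.ne', one_div, Real.log_inv]; ring
    rw [rpow_eq_exp hq0, rpow_eq_exp hN0, rpow_eq_exp hq1N, rpow_eq_exp hp0, rpow_eq_exp hp1N,
      ← Real.exp_log hc]
    simp only [← Real.exp_add]
    rw [Real.exp_eq_exp, hlq, hlp]
    rw [hedef] at hlogN
    linear_combination -hlogN

lemma gf_ofReal (t : ℝ) (x : ℝ) :
    gf (t:ℂ) x = ((Real.exp (-(Real.pi * t) * x^2) : ℝ) : ℂ) := by
  unfold gf
  rw [Complex.ofReal_exp]
  congr 1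
  push_cast
  ring

noncomputable def spikeMap (a m : ℝ) (ha : 0 < a) : SchwartzMap ℝ ℂ :=
  gaussMap 1 (by norm_num) + m • gaussMap (a:ℂ) (by simpa using ha)

lemma spike_coe (a m : ℝ) (ha : 0 < a) :
    ⇑(spikeMap a m ha) = fun x => gf 1 x + (m:ℂ) * gf (a:ℂ) x := by
  funext x
  show (gaussMap 1 (by norm_num) + m • gaussMap (a:ℂ) (by simpa using ha)) x = _
  rw [SchwartzMap.add_apply, SchwartzMap.smul_apply, gaussMap_coe, gaussMap_coe]
  rw [Complex.real_smul]

lemma spike_coe' (a m : ℝ) (ha : 0 < a) (x : ℝ) :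
    (spikeMap a m ha) x = ((S m a x : ℝ) : ℂ) := by
  rw [show (spikeMap a m ha) x = gf 1 x + (m:ℂ) * gf (a:ℂ) x from
    congrFun (spike_coe a m ha) x]
  unfold S
  rw [show (1:ℂ) = ((1:ℝ):ℂ) by norm_num, gf_ofReal, gf_ofReal]
  push_cast
  ring

lemma Lnorm_spike (r : ℝ) (a m : ℝ) (ha : 0 < a) (hm : 0 ≤ m) :
    Lnorm r ⇑(spikeMap a m ha) = (J r m a)^(1/r) := by
  unfold Lnorm J
  congr 1
  apply integral_congr_ae
  filter_upwards with x
  rw [spike_coe', Complex.norm_real, Real.norm_eq_abs, abs_of_nonneg (S_pos hm x).le]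

lemma integrable_gf_char {b : ℂ} (hb : 0 < b.re) (ξ : ℝ) :
    Integrable (fun x : ℝ => gf b x * Complex.exp (-2 * (Real.pi:ℂ) * Complex.I * x * ξ)) := by
  have hcont : Continuous (fun x : ℝ => gf b x * Complex.exp (-2 * (Real.pi:ℂ) * Complex.I * x * ξ)) := by
    apply Continuous.mul
    · exact Complex.continuous_exp.comp (by fun_prop)
    · exact Complex.continuous_exp.comp (by fun_prop)
  apply Integrable.mono' (g := fun x : ℝ => Real.exp (-(Real.pi * b.re) * x^2)) _
    hcont.aestronglyMeasurable
  · filter_upwards with x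
    rw [norm_mul]
    have h1 : ‖Complex.exp (-2 * (Real.pi:ℂ) * Complex.I * x * ξ)‖ = 1 := by
      rw [Complex.norm_exp]
      have : (-2 * (Real.pi:ℂ) * Complex.I * x * ξ) = ((-2*Real.pi*x*ξ : ℝ) : ℂ) * Complex.I := by
        push_cast; ring
      rw [this]
      simp [Complex.mul_re]
    rw [h1, mul_one, gf_norm]
    apply Real.exp_le_exp.mpr
    apply le_of_eq
    ring
  · have : 0 < Real.pi * b.re := by positivity
    exact integrable_exp_neg_mul_sq this

lemma FT_spike (a m : ℝ) (ha : 0 < a) :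
    FT ⇑(spikeMap a m ha) =
      fun ξ : ℝ => ((S (m * a^(-(1/2):ℝ)) (1/a) ξ : ℝ) : ℂ) := by
  have ha' : (0:ℝ) < ((a:ℂ)).re := by simpa using ha
  have h1' : (0:ℝ) < ((1:ℂ)).re := by norm_num
  funext ξ
  rw [spike_coe a m ha]
  have step : FT (fun x => gf 1 x + (m:ℂ) * gf (a:ℂ) x) ξ
      = FT (gf 1) ξ + (m:ℂ) * FT (gf (a:ℂ)) ξ := by
    have key : FT (fun x => gf 1 x + (m:ℂ) * gf (a:ℂ) x) ξ
        = ∫ x : ℝ, (gf 1 x * Complex.exp (-2 * (Real.pi:ℂ) * Complex.I * x * ξ)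
          + (m:ℂ) * (gf (a:ℂ) x * Complex.exp (-2 * (Real.pi:ℂ) * Complex.I * x * ξ))) := by
      unfold FT
      congr 1
      funext x
      simp only []
      ring
    rw [key, integral_add (integrable_gf_char h1' ξ) ((integrable_gf_char ha' ξ).const_mul _),
      integral_const_mul]
    rfl
  rw [step, FT_gf h1', FT_gf ha']
  have h1 : ((1:ℂ))^((1:ℂ)/2) = 1 := Complex.one_cpow _
  have hca : ((a:ℂ))^((1:ℂ)/2) = ((a ^ ((1:ℝ)/2) : ℝ) : ℂ) := by
    rw [show ((1:ℂ)/2) = (((1:ℝ)/2 : ℝ):ℂ) by norm_num, ← Complex.ofReal_cpow ha.le]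
  have hinva : (1 / (a:ℂ)) = (((1/a : ℝ)):ℂ) := by push_cast; ring
  rw [h1, hca, hinva]
  beta_reduce
  rw [show (1:ℂ)/1 = ((1:ℝ):ℂ) by norm_num]
  rw [gf_ofReal, gf_ofReal]
  have hm2 : (a:ℝ) ^ (-(1/2):ℝ) = (a ^ ((1:ℝ)/2))⁻¹ := by
    rw [Real.rpow_neg ha.le]
  unfold S
  push_cast [hm2]
  ring

lemma Lnorm_FT_spike (r a m : ℝ) (ha : 0 < a) (hm : 0 ≤ m) :
    Lnorm r (FT ⇑(spikeMap a m ha)) = (J r (m * a^(-(1/2):ℝ)) (1/a))^(1/r) := by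
  rw [FT_spike a m ha]
  unfold Lnorm J
  congr 1
  apply integral_congr_ae
  filter_upwards with x
  have hm2 : 0 ≤ m * a^(-(1/2):ℝ) := by positivity
  rw [Complex.norm_real, Real.norm_eq_abs, abs_of_nonneg (S_pos hm2 x).le]

lemma spike_ne_zero (a m : ℝ) (ha : 0 < a) (hm : 0 ≤ m) : spikeMap a m ha ≠ 0 := by
  intro h
  have h2 := congrArg (fun f : SchwartzMap ℝ ℂ => f 0) h
  rw [show (spikeMap a m ha) 0 = ((S m a 0 : ℝ) : ℂ) from
    spike_coe' a m ha 0] at h2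
  simp only [SchwartzMap.zero_apply] at h2
  exact absurd (Complex.ofReal_eq_zero.mp h2) (ne_of_gt (S_pos hm 0))

noncomputable def Phi (r s a : ℝ) : ℝ :=
  (J r (a^s) a)^(1/r) * (J r (a^s * a^(-(1/2):ℝ)) (1/a))^(1/r)

lemma Phi_pos {r s a : ℝ} (hr : 0 < r) (ha : 0 < a) : 0 < Phi r s a := by
  unfold Phi
  have h1 : 0 < J r (a^s) a :=
    lt_of_lt_of_le (Real.rpow_pos_of_pos hr _) (J_ge_one (by positivity) ha hr)
  have h2 : 0 < J r (a^s * a^(-(1/2):ℝ)) (1/a) :=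
    lt_of_lt_of_le (Real.rpow_pos_of_pos hr _) (J_ge_one (by positivity) (by positivity) hr)
  positivity

lemma Phi_contAt {r s : ℝ} (hr : 0 < r) {a₀ : ℝ} (ha : 0 < a₀) :
    ContinuousAt (fun a => Phi r s a) a₀ := by
  unfold Phi
  have hc1 : ContinuousAt (fun a : ℝ => a ^ s) a₀ :=
    Real.continuousAt_rpow_const a₀ s (Or.inl ha.ne')
  have hc2 : ContinuousAt (fun a : ℝ => a ^ (-(1/2):ℝ)) a₀ :=
    Real.continuousAt_rpow_const a₀ _ (Or.inl ha.ne')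
  have h1 : ContinuousAt (fun a => J r (a^s) a) a₀ :=
    J_contAt hr hc1 continuousAt_id (by positivity) ha
  have h2 : ContinuousAt (fun a => J r (a^s * a^(-(1/2):ℝ)) (1/a)) a₀ :=
    J_contAt hr (hc1.mul hc2) (continuousAt_const.div continuousAt_id ha.ne') (by positivity)
      (by positivity)
  exact (h1.rpow_const (Or.inr (by positivity))).mul (h2.rpow_const (Or.inr (by positivity)))

lemma J_one {r : ℝ} (hr : 0 < r) : J r 1 1 = (2:ℝ)^r * r^(-(1/2):ℝ) := by
  unfold J
  have h : ∀ x : ℝ, S 1 1 x ^ r = (2:ℝ)^r * Real.exp (-(Real.pi * (1*r)) * x^2) := by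
    intro x
    unfold S
    rw [one_mul, ← two_mul, Real.mul_rpow (by norm_num) (Real.exp_nonneg _), gauss_rpow]
  simp_rw [h]
  rw [integral_const_mul, I_val (by positivity), one_mul]

lemma Phi_one {r s : ℝ} (hr : 0 < r) :
    Phi r s 1 = Real.exp (((r*Real.log 2 + (-(1/2))*Real.log r) * (1/r)) * 2) := by
  unfold Phi
  rw [Real.one_rpow, Real.one_rpow, one_mul, show (1:ℝ)/1 = 1 by norm_num, J_one hr]
  rw [show ((2:ℝ)^r * r^(-(1/2):ℝ)) = Real.exp (r*Real.log 2 + (-(1/2))*Real.log r) by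
    rw [rpow_eq_exp two_pos, rpow_eq_exp hr, ← Real.exp_add, mul_comm r (Real.log 2)]]
  rw [exp_rpow, ← Real.exp_add]
  congr 1
  ring

lemma Phi_low {r s a : ℝ} (hr : 0 < r) (ha : 1 ≤ a) :
    Real.exp ((s - 1/(2*r))*Real.log a + (-(1/r))*Real.log r) ≤ Phi r s a := by
  have ha0 : 0 < a := lt_of_lt_of_le one_pos ha
  have hJ1 := J_ge_two (μ := a^s) (ν := a) (by positivity) ha0 hr
  have hE1 : (a^s)^r * (a*r)^(-(1/2):ℝ)
      = Real.exp ((s*Real.log a)*r + (-(1/2))*(Real.log a + Real.log r)) := by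
    rw [rpow_eq_exp ha0 s, exp_rpow, rpow_eq_exp (mul_pos ha0 hr), Real.log_mul ha0.ne' hr.ne',
      ← Real.exp_add]
  rw [hE1] at hJ1
  have h1 : Real.exp (((s*Real.log a)*r + (-(1/2))*(Real.log a + Real.log r)) * (1/r))
      ≤ (J r (a^s) a)^(1/r) := by
    rw [← exp_rpow]
    exact Real.rpow_le_rpow (Real.exp_nonneg _) hJ1 (by positivity)
  have hJ2 := J_ge_one (μ := a^s * a^(-(1/2):ℝ)) (ν := 1/a) (by positivity) (by positivity) hr
  rw [rpow_eq_exp hr (-(1/2):ℝ)] at hJ2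
  have h2 : Real.exp (((-(1/2))*Real.log r) * (1/r))
      ≤ (J r (a^s * a^(-(1/2):ℝ)) (1/a))^(1/r) := by
    rw [← exp_rpow]
    exact Real.rpow_le_rpow (Real.exp_nonneg _) hJ2 (by positivity)
  calc Real.exp ((s - 1/(2*r))*Real.log a + (-(1/r))*Real.log r)
      = Real.exp (((s*Real.log a)*r + (-(1/2))*(Real.log a + Real.log r)) * (1/r))
        * Real.exp (((-(1/2))*Real.log r) * (1/r)) := by
        rw [← Real.exp_add]
        congr 1
        field_simp
        ring
    _ ≤ Phi r s a :=
        mul_le_mul h1 h2 (Real.exp_nonneg _) (le_trans (Real.exp_nonneg _) h1)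

lemma Phi_up {r s a T : ℝ} (hr : 0 < r) (hsr : s*r = 1/2) (ha : 1 ≤ a)
    (hT1 : 1 - r/2 ≤ T) (hT0 : 0 ≤ T) :
    Phi r s a ≤ Real.exp (2*Real.log 2 + 2*Real.log 2*(1/r)
      + (T*(1/r))*Real.log a + (-(1/r))*Real.log r) := by
  have ha0 : 0 < a := lt_of_lt_of_le one_pos ha
  have hla : 0 ≤ Real.log a := Real.log_nonneg ha
  -- first factor
  have hJ1 := J_le (μ := a^s) (ν := a) (by positivity) ha0 hr
  have hE1 : (a^s)^r * (a*r)^(-(1/2):ℝ) = r ^ (-(1/2):ℝ) := by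
    rw [rpow_eq_exp ha0 s, exp_rpow, rpow_eq_exp (mul_pos ha0 hr), Real.log_mul ha0.ne' hr.ne',
      ← Real.exp_add, rpow_eq_exp hr]
    congr 1
    nlinarith [hsr]
  rw [hE1] at hJ1
  have hJ1' : J r (a^s) a ≤ Real.exp (r * Real.log 2 + Real.log 2 + (-(1/2))*Real.log r) := by
    calc J r (a^s) a ≤ (2:ℝ)^r * (r ^ (-(1/2):ℝ) + r ^ (-(1/2):ℝ)) := hJ1
      _ = Real.exp (r * Real.log 2) * (Real.exp (Real.log 2)
            * Real.exp ((-(1/2))*Real.log r)) := by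
        rw [rpow_eq_exp hr, rpow_eq_exp two_pos, Real.exp_log two_pos, mul_comm r (Real.log 2)]
        ring
      _ = Real.exp (r * Real.log 2 + Real.log 2 + (-(1/2))*Real.log r) := by
        rw [← Real.exp_add, ← Real.exp_add]
        congr 1
        ring
  have h1 : (J r (a^s) a) ^ (1/r : ℝ)
      ≤ Real.exp ((r * Real.log 2 + Real.log 2 + (-(1/2))*Real.log r) * (1/r)) := by
    rw [← exp_rpow]
    apply Real.rpow_le_rpow _ hJ1' (by positivity)
    exact le_trans (Real.rpow_nonneg hr.le _) (J_ge_one (by positivity) ha0 hr)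
  -- second factor
  have hJ2 := J_le (μ := a^s * a^(-(1/2):ℝ)) (ν := 1/a) (by positivity) (by positivity) hr
  have hE2 : (a^s * a^(-(1/2):ℝ))^r * ((1/a) * r)^(-(1/2):ℝ)
      ≤ Real.exp (T * Real.log a + (-(1/2))*Real.log r) := by
    have e1 : (a^s * a^(-(1/2):ℝ))^r * ((1/a) * r)^(-(1/2):ℝ)
        = Real.exp (((s + -(1/2)) * Real.log a * r) + (-(1/2))*(-Real.log a + Real.log r)) := by
      rw [rpow_eq_exp ha0 s, rpow_eq_exp ha0 (-(1/2):ℝ), ← Real.exp_add, exp_rpow,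
        rpow_eq_exp (by positivity : (0:ℝ) < (1/a)*r), Real.log_mul (by positivity) hr.ne',
        show Real.log (1/a) = -Real.log a by rw [one_div, Real.log_inv], ← Real.exp_add]
      congr 1
      ring
    rw [e1]
    apply Real.exp_le_exp.mpr
    have hcoef : (s + -(1/2)) * r + 1/2 ≤ T := by nlinarith
    nlinarith [mul_le_mul_of_nonneg_right hcoef hla]
  have hr2 : r ^ (-(1/2):ℝ) ≤ Real.exp (T * Real.log a + (-(1/2))*Real.log r) := by
    rw [rpow_eq_exp hr]
    apply Real.exp_le_exp.mpr
    nlinarith [mul_nonneg hT0 hla]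
  have hJ2' : J r (a^s * a^(-(1/2):ℝ)) (1/a)
      ≤ Real.exp (r * Real.log 2 + Real.log 2 + T * Real.log a + (-(1/2))*Real.log r) := by
    calc J r (a^s * a^(-(1/2):ℝ)) (1/a)
        ≤ (2:ℝ)^r * (r ^ (-(1/2):ℝ) + (a^s * a^(-(1/2):ℝ))^r * ((1/a) * r)^(-(1/2):ℝ)) := hJ2
      _ ≤ (2:ℝ)^r * (2 * Real.exp (T * Real.log a + (-(1/2))*Real.log r)) := by
          apply mul_le_mul_of_nonneg_left _ (Real.rpow_nonneg (by norm_num) r)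
          linarith
      _ = Real.exp (r * Real.log 2 + Real.log 2 + T * Real.log a + (-(1/2))*Real.log r) := by
          rw [rpow_eq_exp two_pos]
          rw [show Real.exp (r * Real.log 2 + Real.log 2 + T * Real.log a + (-(1/2))*Real.log r)
              = Real.exp (r * Real.log 2) * (Real.exp (Real.log 2)
                * Real.exp (T * Real.log a + (-(1/2))*Real.log r)) by
              rw [← Real.exp_add, ← Real.exp_add]; congr 1; ring]
          rw [Real.exp_log two_pos]
  have h2 : (J r (a^s * a^(-(1/2):ℝ)) (1/a)) ^ (1/r : ℝ)
      ≤ Real.exp ((r * Real.log 2 + Real.log 2 + T * Real.log a + (-(1/2))*Real.log r) * (1/r)) := by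
    rw [← exp_rpow]
    apply Real.rpow_le_rpow _ hJ2' (by positivity)
    exact le_trans (Real.rpow_nonneg hr.le _) (J_ge_one (by positivity) (by positivity) hr)
  calc Phi r s a ≤ Real.exp ((r * Real.log 2 + Real.log 2 + (-(1/2))*Real.log r) * (1/r))
        * Real.exp ((r * Real.log 2 + Real.log 2 + T * Real.log a + (-(1/2))*Real.log r) * (1/r)) := by
        unfold Phi
        exact mul_le_mul h1 h2
          (Real.rpow_nonneg (le_trans (Real.rpow_nonneg hr.le _)
            (J_ge_one (by positivity) (by positivity) hr)) _)
          (Real.exp_nonneg _)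
    _ = Real.exp (2*Real.log 2 + 2*Real.log 2*(1/r)
        + (T*(1/r))*Real.log a + (-(1/r))*Real.log r) := by
        rw [← Real.exp_add]
        congr 1
        field_simp
        ring

theorem spike_case (p q c : ℝ) (hp : 1 < p) (hpq : p < q) (hsum : 1/p + 1/q < 1) (hc : 0 < c)
    (hcK : p ^ (1/p:ℝ) * q ^ (-(1/q):ℝ) ≤ c) :
    ∃ f : SchwartzMap ℝ ℂ, f ≠ 0 ∧
      Lnorm q ⇑f * Lnorm q (FT ⇑f) = c * (Lnorm p ⇑f * Lnorm p (FT ⇑f)) := by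
  have hp0 : (0:ℝ) < p := by linarith
  have hq0 : (0:ℝ) < q := by linarith
  set s : ℝ := 1/(2*p) with hsdef
  have hsr : s * p = 1/2 := by rw [hsdef]; field_simp
  set T : ℝ := max 0 (1 - p/2) with hTdef
  have hT0 : 0 ≤ T := le_max_left _ _
  have hT1 : 1 - p/2 ≤ T := le_max_right _ _
  have hεpos : 0 < s - 1/(2*q) - T*(1/p) := by
    have hq2 : 1/(2*q) < 1/(2*p) := by
      apply one_div_lt_one_div_of_lt (by positivity)
      linarith
    rcases le_or_gt (1 - p/2) 0 with h | h
    · have hTeq : T = 0 := max_eq_left h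
      rw [hTeq, hsdef]
      linarith
    · have hTeq : T = 1 - p/2 := max_eq_right h.le
      have e1 : (1 - p/2)*(1/p) = 1/p - 1/2 := by
        have hpne : p ≠ 0 := hp0.ne'
        field_simp
      have e2 : (1:ℝ)/(2*p) = (1/p)/2 := by ring
      have e3 : (1:ℝ)/(2*q) = (1/q)/2 := by ring
      rw [hTeq, hsdef, e1, e2, e3]
      linarith
  -- endpoint at a = 1
  have hψ1 : Phi q s 1 ≤ c * Phi p s 1 := by
    rw [Phi_one hq0, Phi_one hp0]
    calc Real.exp (((q*Real.log 2 + (-(1/2))*Real.log q) * (1/q)) * 2)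
        = (p ^ (1/p:ℝ) * q ^ (-(1/q):ℝ))
          * Real.exp (((p*Real.log 2 + (-(1/2))*Real.log p) * (1/p)) * 2) := by
          rw [rpow_eq_exp hp0, rpow_eq_exp hq0, ← Real.exp_add, ← Real.exp_add]
          congr 1
          field_simp
          ring
      _ ≤ c * Real.exp (((p*Real.log 2 + (-(1/2))*Real.log p) * (1/p)) * 2) :=
          mul_le_mul_of_nonneg_right hcK (Real.exp_nonneg _)
  -- choose the right endpoint A
  set D : ℝ := Real.log c + 2*Real.log 2 + 2*Real.log 2*(1/p)
    + (1/q)*Real.log q - (1/p)*Real.log p with hDdef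
  set A : ℝ := max 1 (Real.exp ((D+1)/(s - 1/(2*q) - T*(1/p)))) with hAdef
  have hA1 : 1 ≤ A := le_max_left _ _
  have hA0 : 0 < A := lt_of_lt_of_le one_pos hA1
  have hlogA : (D+1)/(s - 1/(2*q) - T*(1/p)) ≤ Real.log A := by
    rw [← Real.log_exp ((D+1)/(s - 1/(2*q) - T*(1/p)))]
    exact Real.log_le_log (Real.exp_pos _) (le_max_right _ _)
  have hψA : c * Phi p s A ≤ Phi q s A := by
    have hup := Phi_up (a := A) (T := T) hp0 hsr hA1 hT1 hT0
    have hlow := Phi_low (r := q) (s := s) (a := A) hq0 hA1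
    have hmul := mul_le_mul_of_nonneg_left hlogA hεpos.le
    have hcancel : (s - 1/(2*q) - T*(1/p)) * ((D+1)/(s - 1/(2*q) - T*(1/p))) = D + 1 := by
      rw [mul_comm, div_mul_cancel₀ _ hεpos.ne']
    rw [hcancel] at hmul
    have key : Real.log c + (2*Real.log 2 + 2*Real.log 2*(1/p)
        + (T*(1/p))*Real.log A + (-(1/p))*Real.log p)
        ≤ (s - 1/(2*q))*Real.log A + (-(1/q))*Real.log q := by
      rw [hDdef] at hmul
      nlinarith [hmul]
    calc c * Phi p s A
        ≤ c * Real.exp (2*Real.log 2 + 2*Real.log 2*(1/p)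
          + (T*(1/p))*Real.log A + (-(1/p))*Real.log p) :=
          mul_le_mul_of_nonneg_left hup hc.le
      _ = Real.exp (Real.log c + (2*Real.log 2 + 2*Real.log 2*(1/p)
          + (T*(1/p))*Real.log A + (-(1/p))*Real.log p)) := by
          rw [Real.exp_add (Real.log c), Real.exp_log hc]
      _ ≤ Real.exp ((s - 1/(2*q))*Real.log A + (-(1/q))*Real.log q) :=
          Real.exp_le_exp.mpr key
      _ ≤ Phi q s A := hlow
  -- IVT
  have hcont : ContinuousOn (fun a => Phi q s a - c * Phi p s a) (Set.Icc 1 A) := by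
    intro a ha
    have ha0 : 0 < a := lt_of_lt_of_le one_pos ha.1
    exact ((Phi_contAt hq0 ha0).sub (continuousAt_const.mul (Phi_contAt hp0 ha0))).continuousWithinAt
  have hmem : (0:ℝ) ∈ Set.Icc ((fun a => Phi q s a - c * Phi p s a) 1)
      ((fun a => Phi q s a - c * Phi p s a) A) := by
    constructor
    · simp only []
      linarith
    · simp only []
      linarith
  obtain ⟨a, haIcc, hψa⟩ := intermediate_value_Icc hA1 hcont hmem
  have ha0 : 0 < a := lt_of_lt_of_le one_pos haIcc.1
  have hm : 0 ≤ a ^ s := Real.rpow_nonneg ha0.le s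
  refine ⟨spikeMap a (a^s) ha0, spike_ne_zero a (a^s) ha0 hm, ?_⟩
  rw [Lnorm_spike q a (a^s) ha0 hm, Lnorm_FT_spike q a (a^s) ha0 hm,
    Lnorm_spike p a (a^s) ha0 hm, Lnorm_FT_spike p a (a^s) ha0 hm]
  have : Phi q s a - c * Phi p s a = 0 := hψa
  show Phi q s a = c * Phi p s a
  linarith

/-- Surjectivity of the Wigderson-Wigderson functional `F_{p,q}` onto `ℝ_{>0}`
when `1 < p < q < ∞` and `1/p + 1/q < 1`. -/
theorem WW_functional_surjective (p q : ℝ) (hp : 1 < p) (hpq : p < q)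
    (hsum : 1 / p + 1 / q < 1) (c : ℝ) (hc : 0 < c) :
    ∃ f : SchwartzMap ℝ ℂ, f ≠ 0 ∧
      Lnorm q ⇑f * Lnorm q (FT ⇑f) = c * (Lnorm p ⇑f * Lnorm p (FT ⇑f)) := by
  rcases le_or_gt c (p ^ (1/p:ℝ) * q ^ (-(1/q):ℝ)) with h | h
  · exact chirp_case p q c hp hpq hc h
  · exact spike_case p q c hp hpq hsum hc h.le

end
end

section
/- Intermediate value lemma for the Wigderson-Wigderson functional: let p, q be reals with 1 < p < q < ∞, and define F_{p,q}(f) = ‖f‖_q ‖𝓕f‖_q / (‖f‖_p ‖𝓕f‖_p) for nonzero f ∈ 𝓢(ℝ). Suppose there exist sequences (f_n) and (g_n) of nonzero Schwartz functions such that F_{p,q}(f_n) → 0 and F_{p,q}(g_n) → ∞ as n → ∞, and such that λ f_n + (1 − λ) g_n ≠ 0 for every λ ∈ [0,1] and every n. Then for every real c > 0 there exists a nonzero f ∈ 𝓢(ℝ) with F_{p,q}(f) = c. -/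
open MeasureTheory SchwartzMap

lemma FT_eq_s16 (h : SchwartzMap ℝ ℂ) : FT ⇑h = ⇑(fourierTransformCLE ℂ (SchwartzMap ℝ ℂ) h) := by
  funext ξ
  have : ⇑(fourierTransformCLE ℂ (SchwartzMap ℝ ℂ) h) = FourierTransform.fourier ⇑h := rfl
  rw [this, Real.fourier_real_eq_integral_exp_smul]
  unfold FT
  congr 1
  funext x
  rw [smul_eq_mul, mul_comm]
  congr 1
  push_cast
  ring_nf

lemma integrable_rpow_aux {u : ℝ → ℝ} (hu0 : ∀ x, 0 ≤ u x) (hc : Continuous u)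
    (hui : Integrable u) {M : ℝ} (hM : ∀ x, u x ≤ M) {r : ℝ} (hr : 1 ≤ r) :
    Integrable (fun x => u x ^ r) := by
  have hr0 : 0 < r := lt_of_lt_of_le one_pos hr
  refine (hui.const_mul ((M + 1) ^ (r - 1))).mono'
    ((Real.continuous_rpow_const hr0.le).comp hc).aestronglyMeasurable ?_
  refine Filter.Eventually.of_forall fun x => ?_
  have hM1 : 0 ≤ M + 1 := by have := (hu0 x).trans (hM x); linarith
  rw [Real.norm_of_nonneg (Real.rpow_nonneg (hu0 x) r)]
  rcases eq_or_lt_of_le (hu0 x) with h | h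
  · rw [← h, Real.zero_rpow (ne_of_gt hr0), mul_zero]
  · have e1 : u x ^ r = u x ^ (r - 1) * u x := by
      rw [← Real.rpow_add_one (ne_of_gt h)]; ring_nf
    rw [e1]
    refine mul_le_mul_of_nonneg_right ?_ (hu0 x)
    exact Real.rpow_le_rpow (hu0 x) (by linarith [hM x]) (by linarith)

lemma schwartz_bound (h : SchwartzMap ℝ ℂ) : ∃ M : ℝ, ∀ x, ‖h x‖ ≤ M := by
  obtain ⟨C, -, hC⟩ := h.decay 0 0
  exact ⟨C, fun x => by simpa using hC x⟩

lemma schwartz_integrable_rpow (h : SchwartzMap ℝ ℂ) {r : ℝ} (hr : 1 ≤ r) :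
    Integrable (fun x => ‖h x‖ ^ r) := by
  obtain ⟨M, hM⟩ := schwartz_bound h
  exact integrable_rpow_aux (fun x => norm_nonneg _)
    (continuous_norm.comp h.continuous) h.integrable.norm hM hr

lemma Lnorm_pos {r : ℝ} (hr : 1 ≤ r) {h : SchwartzMap ℝ ℂ} (h0 : h ≠ 0) :
    0 < Lnorm r ⇑h := by
  have hr0 : 0 < r := lt_of_lt_of_le one_pos hr
  have hpos : 0 < ∫ x, ‖h x‖ ^ r := by
    rw [integral_pos_iff_support_of_nonneg
      (fun x => Real.rpow_nonneg (norm_nonneg _) r) (schwartz_integrable_rpow h hr)]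
    have hsupp : Function.support (fun x => ‖h x‖ ^ r) = {x | h x ≠ 0} := by
      ext x
      simp only [Function.mem_support, Set.mem_setOf_eq, ne_eq]
      rw [Real.rpow_eq_zero (norm_nonneg _) (ne_of_gt hr0)]
      simp
    rw [hsupp]
    have hopen : IsOpen {x : ℝ | h x ≠ 0} :=
      isOpen_compl_singleton.preimage h.continuous
    refine hopen.measure_pos volume ?_
    by_contra hne
    push_neg at hne
    simp only [Set.not_nonempty_iff_eq_empty, Set.eq_empty_iff_forall_notMem,
      Set.mem_setOf_eq, not_not] at hne
    exact h0 (SchwartzMap.ext hne)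
  exact Real.rpow_pos_of_pos hpos _

lemma contOn_integral (a b : SchwartzMap ℝ ℂ) {r : ℝ} (hr : 1 ≤ r) :
    ContinuousOn (fun lam : ℝ =>
      ∫ x : ℝ, ‖(lam : ℂ) * a x + ((1 - lam : ℝ) : ℂ) * b x‖ ^ r)
      (Set.Icc 0 1) := by
  have hr0 : 0 < r := lt_of_lt_of_le one_pos hr
  apply continuousOn_of_dominated
    (bound := fun x => (‖a x‖ + ‖b x‖) ^ r)
  · intro lam _
    refine Continuous.aestronglyMeasurable ?_
    refine (Real.continuous_rpow_const hr0.le).comp ?_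
    exact continuous_norm.comp (by fun_prop)
  · intro lam hlam
    refine Filter.Eventually.of_forall fun x => ?_
    rw [Real.norm_of_nonneg (Real.rpow_nonneg (norm_nonneg _) r)]
    refine Real.rpow_le_rpow (norm_nonneg _) ?_ hr0.le
    obtain ⟨h0, h1⟩ := hlam
    calc ‖(lam : ℂ) * a x + ((1 - lam : ℝ) : ℂ) * b x‖
        ≤ ‖(lam : ℂ) * a x‖ + ‖((1 - lam : ℝ) : ℂ) * b x‖ :=
          norm_add_le _ _
      _ = |lam| * ‖a x‖ + |1 - lam| * ‖b x‖ := by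
          rw [norm_mul, norm_mul, Complex.norm_real, Complex.norm_real, Real.norm_eq_abs, Real.norm_eq_abs]
      _ ≤ 1 * ‖a x‖ + 1 * ‖b x‖ := by
          refine add_le_add ?_ ?_
          · exact mul_le_mul_of_nonneg_right
              (by rw [abs_of_nonneg h0]; exact h1) (norm_nonneg _)
          · exact mul_le_mul_of_nonneg_right
              (by rw [abs_of_nonneg (by linarith : (0:ℝ) ≤ 1 - lam)]; linarith)
              (norm_nonneg _)
      _ = ‖a x‖ + ‖b x‖ := by ring
  · obtain ⟨Ma, hMa⟩ := schwartz_bound a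
    obtain ⟨Mb, hMb⟩ := schwartz_bound b
    refine integrable_rpow_aux
      (fun x => add_nonneg (norm_nonneg _) (norm_nonneg _))
      ((continuous_norm.comp a.continuous).add
        (continuous_norm.comp b.continuous))
      (a.integrable.norm.add b.integrable.norm) (M := Ma + Mb)
      (fun x => add_le_add (hMa x) (hMb x)) hr
  · refine Filter.Eventually.of_forall fun x => ?_
    refine Continuous.continuousOn ?_
    refine (Real.continuous_rpow_const hr0.le).comp ?_
    refine continuous_norm.comp ?_
    fun_prop

/-- Intermediate value lemma for the Wigderson-Wigderson functional
`F_{p,q}(f) = ‖f‖_q ‖𝓕f‖_q / (‖f‖_p ‖𝓕f‖_p)`. -/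
theorem WW_functional_IVT (p q : ℝ) (hp : 1 < p) (hpq : p < q)
    (f g : ℕ → SchwartzMap ℝ ℂ)
    (hf0 : ∀ n, f n ≠ 0) (hg0 : ∀ n, g n ≠ 0)
    (hf : Filter.Tendsto
      (fun n => Lnorm q ⇑(f n) * Lnorm q (FT ⇑(f n)) / (Lnorm p ⇑(f n) * Lnorm p (FT ⇑(f n))))
      Filter.atTop (nhds 0))
    (hg : Filter.Tendsto
      (fun n => Lnorm q ⇑(g n) * Lnorm q (FT ⇑(g n)) / (Lnorm p ⇑(g n) * Lnorm p (FT ⇑(g n))))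
      Filter.atTop Filter.atTop)
    (hcomb : ∀ lam : ℝ, lam ∈ Set.Icc (0:ℝ) 1 → ∀ n,
      (lam : ℂ) • f n + ((1 - lam : ℝ) : ℂ) • g n ≠ 0)
    (c : ℝ) (hc : 0 < c) :
    ∃ h : SchwartzMap ℝ ℂ, h ≠ 0 ∧
      Lnorm q ⇑h * Lnorm q (FT ⇑h) / (Lnorm p ⇑h * Lnorm p (FT ⇑h)) = c := by
  have hp1 : 1 ≤ p := hp.le
  have hq1 : 1 ≤ q := (hp.trans hpq).le
  have h1 : ∀ᶠ n in Filter.atTop,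
      Lnorm q ⇑(f n) * Lnorm q (FT ⇑(f n)) / (Lnorm p ⇑(f n) * Lnorm p (FT ⇑(f n))) < c :=
    hf.eventually (gt_mem_nhds hc)
  have h2 := hg.eventually_gt_atTop c
  obtain ⟨n, hfn, hgn⟩ := (h1.and h2).exists
  set a := f n with ha
  set b := g n with hb
  set Fa := fourierTransformCLE ℂ (SchwartzMap ℝ ℂ) a with hFa
  set Fb := fourierTransformCLE ℂ (SchwartzMap ℝ ℂ) b with hFb
  set φ : ℝ → SchwartzMap ℝ ℂ := fun lam => (lam : ℂ) • a + ((1 - lam : ℝ) : ℂ) • b with hφ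
  have hφcoe : ∀ lam : ℝ,
      ⇑(φ lam) = fun x => (lam : ℂ) * a x + ((1 - lam : ℝ) : ℂ) * b x := by
    intro lam; funext x; simp [hφ, smul_eq_mul]
  have hFTφ : ∀ lam : ℝ,
      FT ⇑(φ lam) = fun x => (lam : ℂ) * Fa x + ((1 - lam : ℝ) : ℂ) * Fb x := by
    intro lam
    rw [FT_eq_s16]
    have he : fourierTransformCLE ℂ (SchwartzMap ℝ ℂ) (φ lam) = (lam : ℂ) • Fa + ((1 - lam : ℝ) : ℂ) • Fb := by
      show fourierTransformCLE ℂ (SchwartzMap ℝ ℂ) ((lam : ℂ) • a + ((1 - lam : ℝ) : ℂ) • b) = _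
      rw [map_add, _root_.map_smul, _root_.map_smul]
    rw [he]; funext x; simp [smul_eq_mul]
  set W : ℝ → ℝ := fun lam =>
    Lnorm q ⇑(φ lam) * Lnorm q (FT ⇑(φ lam)) / (Lnorm p ⇑(φ lam) * Lnorm p (FT ⇑(φ lam)))
    with hW
  have hφ0 : ∀ lam ∈ Set.Icc (0:ℝ) 1, φ lam ≠ 0 := fun lam hlam => hcomb lam hlam n
  have hFT0 : ∀ lam ∈ Set.Icc (0:ℝ) 1, fourierTransformCLE ℂ (SchwartzMap ℝ ℂ) (φ lam) ≠ 0 := by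
    intro lam hlam h0
    exact hφ0 lam hlam ((fourierTransformCLE ℂ (SchwartzMap ℝ ℂ)).map_eq_zero_iff.mp h0)
  have hden : ∀ lam ∈ Set.Icc (0:ℝ) 1,
      Lnorm p ⇑(φ lam) * Lnorm p (FT ⇑(φ lam)) ≠ 0 := by
    intro lam hlam
    have l1 : 0 < Lnorm p ⇑(φ lam) := Lnorm_pos hp1 (hφ0 lam hlam)
    have l2 : 0 < Lnorm p (FT ⇑(φ lam)) := by
      rw [FT_eq_s16]
      exact Lnorm_pos hp1 (hFT0 lam hlam)
    exact ne_of_gt (mul_pos l1 l2)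
  have hLn : ∀ r : ℝ, ∀ lam : ℝ, Lnorm r ⇑(φ lam) =
      (∫ x : ℝ, ‖(lam : ℂ) * a x + ((1 - lam : ℝ) : ℂ) * b x‖ ^ r) ^ (1/r) := by
    intro r lam; rw [Lnorm, hφcoe]
  have hLnF : ∀ r : ℝ, ∀ lam : ℝ, Lnorm r (FT ⇑(φ lam)) =
      (∫ x : ℝ, ‖(lam : ℂ) * Fa x + ((1 - lam : ℝ) : ℂ) * Fb x‖ ^ r) ^ (1/r) := by
    intro r lam; rw [Lnorm, hFTφ]
  have contL : ∀ r : ℝ, 1 ≤ r →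
      ContinuousOn (fun lam => Lnorm r ⇑(φ lam)) (Set.Icc 0 1) := by
    intro r hr
    have := (Real.continuous_rpow_const (by positivity : (0:ℝ) ≤ 1/r)).comp_continuousOn
      (contOn_integral a b hr)
    exact this.congr (fun lam _ => (hLn r lam))
  have contLF : ∀ r : ℝ, 1 ≤ r →
      ContinuousOn (fun lam => Lnorm r (FT ⇑(φ lam))) (Set.Icc 0 1) := by
    intro r hr
    have := (Real.continuous_rpow_const (by positivity : (0:ℝ) ≤ 1/r)).comp_continuousOn
      (contOn_integral Fa Fb hr)
    exact this.congr (fun lam _ => (hLnF r lam))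
  have hcont : ContinuousOn W (Set.Icc 0 1) :=
    ContinuousOn.div ((contL q hq1).mul (contLF q hq1))
      ((contL p hp1).mul (contLF p hp1)) hden
  have hφ1 : φ 1 = a := by
    rw [hφ]; simp
  have hφzero : φ 0 = b := by
    rw [hφ]; simp
  have hW1 : W 1 < c := by
    rw [hW]; simp only [hφ1]; exact hfn
  have hW0 : c < W 0 := by
    rw [hW]; simp only [hφzero]; exact hgn
  have hmem : c ∈ Set.Icc (W 1) (W 0) := ⟨hW1.le, hW0.le⟩
  obtain ⟨lam, hlam, hWc⟩ := intermediate_value_Icc' zero_le_one hcont hmem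
  exact ⟨φ lam, hφ0 lam hlam, hWc⟩
end

section
/- Two-sided bound for the L^r norms of the family g_c: for c > 0 let g_c(x) = c^(−1/2) exp(−π x²/c²) + c^(1/2) exp(−π c² x²). Then for every real 1 < r < ∞, (c^(1/r − 1/2) + c^(1/2 − 1/r)) / (2 r^(1/(2r))) ≤ ‖g_c‖_r ≤ (c^(1/r − 1/2) + c^(1/2 − 1/r)) / r^(1/(2r)). -/
open MeasureTheory Real


open MeasureTheory SchwartzMap

/-- The self-dual Gaussian family
`g_c(x) = c^(-1/2) exp(-π x²/c²) + c^(1/2) exp(-π c² x²)`. -/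
noncomputable def gfam (c : ℝ) : ℝ → ℂ := fun x =>
  ((c ^ (-(1 / 2) : ℝ) * Real.exp (-Real.pi * x ^ 2 / c ^ 2)
    + c ^ ((1 / 2) : ℝ) * Real.exp (-Real.pi * c ^ 2 * x ^ 2) : ℝ) : ℂ)


lemma gauss_rpow_eq (k b r : ℝ) (hk : 0 ≤ k) :
    (fun x : ℝ => (k * Real.exp (-b * x ^ 2)) ^ r)
      = fun x : ℝ => k ^ r * Real.exp (-(b * r) * x ^ 2) := by
  funext x
  rw [Real.mul_rpow hk (Real.exp_pos _).le, ← Real.exp_mul,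
    show -b * x ^ 2 * r = -(b * r) * x ^ 2 from by ring]

lemma gauss_rpow_integrable (k b r : ℝ) (hk : 0 ≤ k) (hb : 0 < b) (hr : 0 < r) :
    Integrable (fun x : ℝ => (k * Real.exp (-b * x ^ 2)) ^ r) := by
  rw [gauss_rpow_eq k b r hk]
  exact (integrable_exp_neg_mul_sq (by positivity)).const_mul _

lemma gauss_rpow_integral (k b r : ℝ) (hk : 0 ≤ k) (hb : 0 < b) (hr : 0 < r) :
    (∫ x : ℝ, (k * Real.exp (-b * x ^ 2)) ^ r) ^ (1 / r)
      = k * (Real.pi / b) ^ (1 / (2 * r)) * r ^ (-(1 / (2 * r))) := by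
  have h1 : (∫ x : ℝ, (k * Real.exp (-b * x ^ 2)) ^ r)
      = k ^ r * Real.sqrt (Real.pi / (b * r)) := by
    rw [gauss_rpow_eq k b r hk, MeasureTheory.integral_const_mul, integral_gaussian]
  rw [h1, Real.sqrt_eq_rpow,
    Real.mul_rpow (by positivity) (by positivity),
    ← Real.rpow_mul hk, mul_one_div, div_self hr.ne',
    Real.rpow_one, ← Real.rpow_mul (by positivity),
    show Real.pi / (b * r) = (Real.pi / b) / r from by ring,
    Real.div_rpow (by positivity) hr.le,
    div_eq_mul_inv, ← Real.rpow_neg hr.le]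
  ring_nf

/-- Two-sided bound for the `L^r` norms of the family `g_c`. -/
theorem gfam_Lnorm_bounds (c : ℝ) (hc : 0 < c) (r : ℝ) (hr : 1 < r) :
    (c ^ (1 / r - 1 / 2) + c ^ (1 / 2 - 1 / r)) / (2 * r ^ (1 / (2 * r))) ≤ Lnorm r (gfam c) ∧
    Lnorm r (gfam c) ≤ (c ^ (1 / r - 1 / 2) + c ^ (1 / 2 - 1 / r)) / r ^ (1 / (2 * r)) := by
  have hr0 : (0:ℝ) < r := by linarith
  set A : ℝ → ℝ := fun x => c ^ (-(1 / 2) : ℝ) * Real.exp (-(Real.pi / c ^ 2) * x ^ 2) with hA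
  set B : ℝ → ℝ := fun x => c ^ ((1 / 2) : ℝ) * Real.exp (-(Real.pi * c ^ 2) * x ^ 2) with hB
  have hAnn : ∀ x, 0 ≤ A x := fun x => by positivity
  have hBnn : ∀ x, 0 ≤ B x := fun x => by positivity
  have hgf : ∀ x, (‖gfam c x‖ : ℝ) = A x + B x := by
    intro x
    have e1 : -Real.pi * x ^ 2 / c ^ 2 = -(Real.pi / c ^ 2) * x ^ 2 := by ring
    have e2 : -Real.pi * c ^ 2 * x ^ 2 = -(Real.pi * c ^ 2) * x ^ 2 := by ring
    rw [gfam, Complex.norm_real, Real.norm_eq_abs, e1, e2, abs_of_nonneg (by positivity)]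
  -- integrability
  have hbA : (0:ℝ) < Real.pi / c ^ 2 := by positivity
  have hbB : (0:ℝ) < Real.pi * c ^ 2 := by positivity
  have hkA : (0:ℝ) ≤ c ^ (-(1 / 2) : ℝ) := by positivity
  have hkB : (0:ℝ) ≤ c ^ ((1 / 2) : ℝ) := by positivity
  have hintA : Integrable (fun x : ℝ => A x ^ r) := gauss_rpow_integrable _ _ r hkA hbA hr0
  have hintB : Integrable (fun x : ℝ => B x ^ r) := gauss_rpow_integrable _ _ r hkB hbB hr0
  -- values
  have hXA : (∫ x : ℝ, A x ^ r) ^ (1 / r)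
      = c ^ (1 / r - 1 / 2) * r ^ (-(1 / (2 * r))) := by
    rw [hA]
    rw [gauss_rpow_integral _ _ r hkA hbA hr0]
    rw [show Real.pi / (Real.pi / c ^ 2) = c ^ 2 from by field_simp]
    rw [← Real.rpow_natCast c 2, ← Real.rpow_mul hc.le, ← Real.rpow_add hc]
    norm_num
    left; rw [show (-(1 / 2):ℝ) + 2 * (r⁻¹ * (1 / 2)) = r⁻¹ - 1 / 2 from by ring]
  have hXB : (∫ x : ℝ, B x ^ r) ^ (1 / r)
      = c ^ (1 / 2 - 1 / r) * r ^ (-(1 / (2 * r))) := by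
    rw [hB]
    rw [gauss_rpow_integral _ _ r hkB hbB hr0]
    rw [show Real.pi / (Real.pi * c ^ 2) = (c ^ 2)⁻¹ from by field_simp]
    rw [← Real.rpow_natCast c 2, ← Real.rpow_neg_one (c ^ ((2:ℕ):ℝ)), ← Real.rpow_mul hc.le,
      ← Real.rpow_mul hc.le, ← Real.rpow_add hc]
    norm_num
    left; rw [show (1 / 2:ℝ) + -(2 * (r⁻¹ * (1 / 2))) = 1 / 2 - r⁻¹ from by ring]
  -- rewrite the L^r norm
  have hLnorm : Lnorm r (gfam c) = (∫ x : ℝ, (A x + B x) ^ r) ^ (1 / r) := by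
    rw [Lnorm]
    congr 1
    exact integral_congr_ae (Filter.Eventually.of_forall fun x => by simp only [hgf x])
  set p : ENNReal := ENNReal.ofReal r with hp
  have hp0 : p ≠ 0 := by
    simp only [hp, ne_eq, ENNReal.ofReal_eq_zero, not_le]; linarith
  have hptop : p ≠ ⊤ := ENNReal.ofReal_ne_top
  have hpr : p.toReal = r := ENNReal.toReal_ofReal hr0.le
  have hAmeas : AEStronglyMeasurable A volume := Continuous.aestronglyMeasurable (by fun_prop)
  have hBmeas : AEStronglyMeasurable B volume := Continuous.aestronglyMeasurable (by fun_prop)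
  have hAm : MemLp A p volume := by
    refine (memLp_norm_rpow_iff hAmeas hp0 hptop).mp ?_
    rw [ENNReal.div_self hp0 hptop, memLp_one_iff_integrable, hpr]
    exact hintA.congr (Filter.Eventually.of_forall fun x => by
      simp only [Real.norm_eq_abs, abs_of_nonneg (hAnn x)])
  have hBm : MemLp B p volume := by
    refine (memLp_norm_rpow_iff hBmeas hp0 hptop).mp ?_
    rw [ENNReal.div_self hp0 hptop, memLp_one_iff_integrable, hpr]
    exact hintB.congr (Filter.Eventually.of_forall fun x => by
      simp only [Real.norm_eq_abs, abs_of_nonneg (hBnn x)])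
  have hABm : MemLp (A + B) p volume := hAm.add hBm
  have hintF : Integrable (fun x : ℝ => (A x + B x) ^ r) := by
    have h := hABm.integrable_norm_rpow hp0 hptop
    rw [hpr] at h
    exact h.congr (Filter.Eventually.of_forall fun x => by
      simp only [Pi.add_apply, Real.norm_eq_abs,
        abs_of_nonneg (add_nonneg (hAnn x) (hBnn x))])
  have hIA : 0 ≤ ∫ x : ℝ, A x ^ r := integral_nonneg fun x => by positivity
  have hIB : 0 ≤ ∫ x : ℝ, B x ^ r := integral_nonneg fun x => by positivity
  -- lower bounds
  have hmonoA : (∫ x : ℝ, A x ^ r) ≤ ∫ x : ℝ, (A x + B x) ^ r :=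
    integral_mono hintA hintF fun x =>
      Real.rpow_le_rpow (hAnn x) (le_add_of_nonneg_right (hBnn x)) hr0.le
  have hmonoB : (∫ x : ℝ, B x ^ r) ≤ ∫ x : ℝ, (A x + B x) ^ r :=
    integral_mono hintB hintF fun x =>
      Real.rpow_le_rpow (hBnn x) (le_add_of_nonneg_left (hAnn x)) hr0.le
  have hLA : c ^ (1 / r - 1 / 2) * r ^ (-(1 / (2 * r))) ≤ Lnorm r (gfam c) := by
    rw [hLnorm, ← hXA]
    exact Real.rpow_le_rpow hIA hmonoA (by positivity)
  have hLB : c ^ (1 / 2 - 1 / r) * r ^ (-(1 / (2 * r))) ≤ Lnorm r (gfam c) := by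
    rw [hLnorm, ← hXB]
    exact Real.rpow_le_rpow hIB hmonoB (by positivity)
  -- upper bound (Minkowski)
  have eF : (∫ a : ℝ, ‖(A + B) a‖ ^ p.toReal) = ∫ x : ℝ, (A x + B x) ^ r := by
    rw [hpr]
    exact integral_congr_ae (Filter.Eventually.of_forall fun x => by
      simp only [Pi.add_apply, Real.norm_eq_abs,
        abs_of_nonneg (add_nonneg (hAnn x) (hBnn x))])
  have eA : (∫ a : ℝ, ‖A a‖ ^ p.toReal) = ∫ x : ℝ, A x ^ r := by
    rw [hpr]
    exact integral_congr_ae (Filter.Eventually.of_forall fun x => by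
      simp only [Real.norm_eq_abs, abs_of_nonneg (hAnn x)])
  have eB : (∫ a : ℝ, ‖B a‖ ^ p.toReal) = ∫ x : ℝ, B x ^ r := by
    rw [hpr]
    exact integral_congr_ae (Filter.Eventually.of_forall fun x => by
      simp only [Real.norm_eq_abs, abs_of_nonneg (hBnn x)])
  have hup : Lnorm r (gfam c)
      ≤ c ^ (1 / r - 1 / 2) * r ^ (-(1 / (2 * r)))
        + c ^ (1 / 2 - 1 / r) * r ^ (-(1 / (2 * r))) := by
    have h1 := eLpNorm_add_le hAmeas hBmeas (ENNReal.one_le_ofReal.mpr hr.le)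
    rw [hABm.eLpNorm_eq_integral_rpow_norm hp0 hptop,
      hAm.eLpNorm_eq_integral_rpow_norm hp0 hptop,
      hBm.eLpNorm_eq_integral_rpow_norm hp0 hptop,
      ← ENNReal.ofReal_add (by positivity) (by positivity)] at h1
    have h2 := (ENNReal.ofReal_le_ofReal_iff (by positivity)).mp h1
    rw [eF, eA, eB, hpr] at h2
    rw [hLnorm, ← hXA, ← hXB]
    simpa [one_div] using h2
  -- assemble
  have ht : (0:ℝ) < r ^ (1 / (2 * r)) := Real.rpow_pos_of_pos hr0 _
  rw [Real.rpow_neg hr0.le] at hLA hLB hup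
  set t : ℝ := r ^ (1 / (2 * r)) with hts
  set L : ℝ := Lnorm r (gfam c) with hLs
  constructor
  · rw [div_le_iff₀ (by positivity)]
    have h1 : c ^ (1 / r - 1 / 2) ≤ L * t := by
      calc c ^ (1 / r - 1 / 2) = c ^ (1 / r - 1 / 2) * t⁻¹ * t := by field_simp
        _ ≤ L * t := mul_le_mul_of_nonneg_right hLA ht.le
    have h2 : c ^ (1 / 2 - 1 / r) ≤ L * t := by
      calc c ^ (1 / 2 - 1 / r) = c ^ (1 / 2 - 1 / r) * t⁻¹ * t := by field_simp
        _ ≤ L * t := mul_le_mul_of_nonneg_right hLB ht.le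
    nlinarith [h1, h2]
  · rw [le_div_iff₀ ht]
    calc L * t ≤ (c ^ (1 / r - 1 / 2) * t⁻¹ + c ^ (1 / 2 - 1 / r) * t⁻¹) * t :=
          mul_le_mul_of_nonneg_right hup ht.le
      _ = (c ^ (1 / r - 1 / 2) + c ^ (1 / 2 - 1 / r)) * (t⁻¹ * t) := by ring
      _ = c ^ (1 / r - 1 / 2) + c ^ (1 / 2 - 1 / r) := by
          rw [inv_mul_cancel₀ ht.ne', mul_one]
end
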